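/- arXiv:2302.07298 — 6 statements merged into one kernel-verified Lean document; each statement's English description precedes it below -/
import Mathlib

section
/- For every x ∈ ℤ and every real s with |s| < 1, E[s^{σ_x} · 1_{σ_x < ∞}] = u_s(x)/u_s(0). (Note u_s(0) ≥ 1 > 0, so the quotient is well defined.) -/
open MeasureTheory ProbabilityTheory Finset

section Aux

variable {Ω : Type*} [MeasurableSpace Ω]

/-- The event that the first index `j ≥ n₀` with `∑_{i<j} τ i = -x` is exactly `j`. -/
def ev (τ : ℕ → Ω → ℤ) (n₀ : ℕ) (x : ℤ) (j : ℕ) : Set Ω :=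
  {ω | n₀ ≤ j ∧ (∑ i ∈ range j, τ i ω) = -x ∧
    ∀ i, n₀ ≤ i → i < j → (∑ i' ∈ range i, τ i' ω) ≠ -x}

lemma sum_meas (τ : ℕ → Ω → ℤ) (hmeas : ∀ n, Measurable (τ n)) (s : Finset ℕ) :
    Measurable (fun ω => ∑ i ∈ s, τ i ω) :=
  Finset.measurable_sum _ (fun i _ => hmeas i)

lemma ev_measurable (τ : ℕ → Ω → ℤ) (hmeas : ∀ n, Measurable (τ n)) (n₀ : ℕ) (x : ℤ) (j : ℕ) :
    MeasurableSet (ev τ n₀ x j) := by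
  have hsum := sum_meas τ hmeas
  have : ev τ n₀ x j = {ω | n₀ ≤ j} ∩ ({ω | (∑ i ∈ range j, τ i ω) = -x} ∩
      ⋂ (i : ℕ), ⋂ (_ : n₀ ≤ i), ⋂ (_ : i < j), {ω | (∑ i' ∈ range i, τ i' ω) ≠ -x}) := by
    ext ω; simp only [ev, Set.mem_inter_iff, Set.mem_setOf_eq, Set.mem_iInter]
  rw [this]
  refine (MeasurableSet.const _).inter (((hsum _) (measurableSet_singleton _)).inter ?_)
  exact MeasurableSet.iInter fun i => MeasurableSet.iInter fun _ => MeasurableSet.iInter fun _ =>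
    ((hsum _) (measurableSet_singleton _)).compl

omit [MeasurableSpace Ω] in
lemma ev_disj (τ : ℕ → Ω → ℤ) (n₀ : ℕ) (x : ℤ) {j j' : ℕ} (h : j ≠ j') {ω : Ω}
    (h1 : ω ∈ ev τ n₀ x j) (h2 : ω ∈ ev τ n₀ x j') : False := by
  rcases Nat.lt_or_ge j j' with hlt | hge
  · exact h2.2.2 j h1.1 hlt h1.2.1
  · exact h1.2.2 j' h2.1 (by omega) h2.2.1

omit [MeasurableSpace Ω] in
lemma ev_partition (τ : ℕ → Ω → ℤ) (n₀ : ℕ) (x : ℤ) {k : ℕ} (hk : n₀ ≤ k) :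
    {ω | (∑ i ∈ range k, τ i ω) = -x} =
      ⋃ j ∈ range (k+1), (ev τ n₀ x j ∩ {ω | (∑ i ∈ Finset.Ico j k, τ i ω) = 0}) := by
  classical
  ext ω
  simp only [Set.mem_setOf_eq, Set.mem_iUnion, Finset.mem_range, Set.mem_inter_iff]
  constructor
  · intro hω
    have hex : ∃ i, n₀ ≤ i ∧ (∑ i' ∈ range i, τ i' ω) = -x := ⟨k, hk, hω⟩
    set j := Nat.find hex with hj
    have hspec := Nat.find_spec hex
    have hjle : j ≤ k := Nat.find_le ⟨hk, hω⟩
    refine ⟨j, by omega, ⟨hspec.1, hspec.2, fun i hi hij hcon => ?_⟩, ?_⟩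
    · exact Nat.find_min hex hij ⟨hi, hcon⟩
    · have := Finset.sum_range_add_sum_Ico (fun i => τ i ω) hjle
      beta_reduce at this
      rw [hspec.2, hω] at this; omega
  · rintro ⟨j, hjk, ⟨-, h2, -⟩, h4⟩
    have hjle : j ≤ k := by omega
    have := Finset.sum_range_add_sum_Ico (fun i => τ i ω) hjle
    beta_reduce at this
    rw [h2, h4] at this; omega

lemma map_add_eq_map_add {P : Measure Ω} [IsProbabilityMeasure P]
    {X A X' A' : Ω → ℤ} (hX : Measurable X) (hA : Measurable A) (hX' : Measurable X')
    (hA' : Measurable A') (h1 : IndepFun X A P) (h2 : IndepFun X' A' P)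
    (hXX : P.map X = P.map X') (hAA : P.map A = P.map A') :
    P.map (X + A) = P.map (X' + A') := by
  have hadd : Measurable (fun p : ℤ × ℤ => p.1 + p.2) := measurable_of_countable _
  have e1 : P.map (fun ω => (X ω, A ω)) = (P.map X).prod (P.map A) :=
    (indepFun_iff_map_prod_eq_prod_map_map hX.aemeasurable hA.aemeasurable).mp h1
  have e2 : P.map (fun ω => (X' ω, A' ω)) = (P.map X').prod (P.map A') :=
    (indepFun_iff_map_prod_eq_prod_map_map hX'.aemeasurable hA'.aemeasurable).mp h2
  have c1 : P.map (X + A) = ((P.map X).prod (P.map A)).map (fun p : ℤ × ℤ => p.1 + p.2) := by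
    rw [← e1, Measure.map_map hadd (hX.prodMk hA)]; rfl
  have c2 : P.map (X' + A') = ((P.map X').prod (P.map A')).map (fun p : ℤ × ℤ => p.1 + p.2) := by
    rw [← e2, Measure.map_map hadd (hX'.prodMk hA')]; rfl
  rw [c1, c2, hXX, hAA]

lemma map_shift_sum (P : Measure Ω) [IsProbabilityMeasure P] (τ : ℕ → Ω → ℤ)
    (hmeas : ∀ n, Measurable (τ n))
    (hindep : iIndepFun τ P)
    (hident : ∀ n, IdentDistrib (τ n) (τ 0) P P) :
    ∀ (m j : ℕ), P.map (∑ i ∈ Finset.Ico j (j+m), τ i) = P.map (∑ i ∈ range m, τ i) := by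
  intro m
  induction m with
  | zero => intro j; simp
  | succ m ih =>
    intro j
    have hm : ∀ (s : Finset ℕ), Measurable (∑ i ∈ s, τ i) := fun s => by
      have h1 := sum_meas τ hmeas s
      have h2 : (∑ i ∈ s, τ i) = fun a => ∑ i ∈ s, τ i a := by
        funext a; simp [Finset.sum_apply]
      rw [h2]; exact h1
    have e1 : ∑ i ∈ Finset.Ico j (j+(m+1)), τ i = (∑ i ∈ Finset.Ico j (j+m), τ i) + τ (j+m) := by
      rw [← add_assoc, Finset.sum_Ico_succ_top (Nat.le_add_right j m)]
    have e2 : ∑ i ∈ range (m+1), τ i = (∑ i ∈ range m, τ i) + τ m := Finset.sum_range_succ τ m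
    rw [e1, e2]
    refine map_add_eq_map_add (hm _) (hmeas _) (hm _) (hmeas _) ?_ ?_ (ih j) ?_
    · exact hindep.indepFun_finset_sum_of_notMem hmeas (by simp)
    · exact hindep.indepFun_finset_sum_of_notMem hmeas (by simp)
    · exact ((hident (j+m)).trans (hident m).symm).map_eq

lemma prob_Ico_sum_zero (P : Measure Ω) [IsProbabilityMeasure P] (τ : ℕ → Ω → ℤ)
    (hmeas : ∀ n, Measurable (τ n))
    (hindep : iIndepFun τ P)
    (hident : ∀ n, IdentDistrib (τ n) (τ 0) P P) {j k : ℕ} (hjk : j ≤ k) :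
    P {ω | (∑ i ∈ Finset.Ico j k, τ i ω) = 0} =
      P {ω | (∑ i ∈ range (k-j), τ i ω) = 0} := by
  have hm : ∀ (s : Finset ℕ), Measurable (∑ i ∈ s, τ i) := fun s => by
    have h1 := sum_meas τ hmeas s
    have h2 : (∑ i ∈ s, τ i) = fun a => ∑ i ∈ s, τ i a := by
      funext a; simp [Finset.sum_apply]
    rw [h2]; exact h1
  have hmap := map_shift_sum P τ hmeas hindep hident (k - j) j
  rw [Nat.add_sub_cancel' hjk] at hmap
  have h0 : ∀ (s : Finset ℕ), {ω | (∑ i ∈ s, τ i ω) = 0} = (∑ i ∈ s, τ i) ⁻¹' {0} := by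
    intro s; ext ω; simp [Finset.sum_apply]
  rw [h0, h0, ← Measure.map_apply (hm _) (measurableSet_singleton 0),
    ← Measure.map_apply (hm _) (measurableSet_singleton 0), hmap]

lemma ev_indep (P : Measure Ω) [IsProbabilityMeasure P] (τ : ℕ → Ω → ℤ)
    (hmeas : ∀ n, Measurable (τ n))
    (hindep : iIndepFun τ P)
    (n₀ : ℕ) (x : ℤ) (j k : ℕ) :
    P (ev τ n₀ x j ∩ {ω | (∑ i ∈ Finset.Ico j k, τ i ω) = 0}) =
      P (ev τ n₀ x j) * P {ω | (∑ i ∈ Finset.Ico j k, τ i ω) = 0} := by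
  classical
  set Y : Ω → (↥(range j) → ℤ) := fun ω i => τ i ω with hY
  set Z : Ω → (↥(Finset.Ico j k) → ℤ) := fun ω i => τ i ω with hZ
  have hInd : IndepFun Y Z P := by
    apply hindep.indepFun_finset (range j) (Finset.Ico j k) ?_ hmeas
    simp only [Finset.disjoint_left, Finset.mem_range, Finset.mem_Ico]
    omega
  set Q : (ℕ → ℤ) → Prop := fun u => n₀ ≤ j ∧ (∑ i ∈ range j, u i) = -x ∧
      ∀ i, n₀ ≤ i → i < j → (∑ i' ∈ range i, u i') ≠ -x with hQ
  set B : Set (↥(range j) → ℤ) :=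
    {v | Q (fun i => if h : i ∈ range j then v ⟨i, h⟩ else 0)} with hB
  have hevB : ev τ n₀ x j = Y ⁻¹' B := by
    ext ω
    simp only [ev, Set.mem_setOf_eq, Set.mem_preimage, hB, hQ, hY]
    have key : ∀ m : ℕ, m ≤ j →
        (∑ i ∈ range m, (if h : i ∈ range j then τ i ω else 0)) = ∑ i ∈ range m, τ i ω := by
      intro m hm
      refine Finset.sum_congr rfl fun i hi => ?_
      rw [dif_pos (Finset.mem_range.mpr (lt_of_lt_of_le (Finset.mem_range.mp hi) hm))]
    constructor
    · rintro ⟨h1, h2, h3⟩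
      refine ⟨h1, by rw [key j le_rfl]; exact h2, fun i hi hij => ?_⟩
      rw [key i (le_of_lt hij)]; exact h3 i hi hij
    · rintro ⟨h1, h2, h3⟩
      refine ⟨h1, by rw [key j le_rfl] at h2; exact h2, fun i hi hij => ?_⟩
      have := h3 i hi hij; rwa [key i (le_of_lt hij)] at this
  set W : Set (↥(Finset.Ico j k) → ℤ) := {v | (∑ i ∈ (Finset.Ico j k).attach, v i) = 0} with hW
  have hevW : {ω | (∑ i ∈ Finset.Ico j k, τ i ω) = 0} = Z ⁻¹' W := by
    ext ω
    simp only [Set.mem_setOf_eq, Set.mem_preimage, hW, hZ]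
    rw [Finset.sum_attach (Finset.Ico j k) (fun i => τ i ω)]
  rw [hevB, hevW]
  exact hInd.measure_inter_preimage_eq_mul B W B.to_countable.measurableSet
    W.to_countable.measurableSet

/-- Main decomposition identity, real-valued. -/
lemma decomp (P : Measure Ω) [IsProbabilityMeasure P] (τ : ℕ → Ω → ℤ)
    (hmeas : ∀ n, Measurable (τ n))
    (hindep : iIndepFun τ P)
    (hident : ∀ n, IdentDistrib (τ n) (τ 0) P P)
    (n₀ : ℕ) (x : ℤ) {k : ℕ} (hk : n₀ ≤ k) :
    (P {ω | (∑ i ∈ range k, τ i ω) = -x}).toReal =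
      ∑ j ∈ range (k+1), (P (ev τ n₀ x j)).toReal *
        (P {ω | (∑ i ∈ range (k-j), τ i ω) = 0}).toReal := by
  have hsum := sum_meas τ hmeas
  rw [ev_partition τ n₀ x hk]
  have hmeasTerm : ∀ j ∈ range (k+1),
      MeasurableSet (ev τ n₀ x j ∩ {ω | (∑ i ∈ Finset.Ico j k, τ i ω) = 0}) := by
    intro j _
    exact (ev_measurable τ hmeas n₀ x j).inter ((hsum _) (measurableSet_singleton _))
  have hdisj : Set.Pairwise ↑(range (k+1)) (Function.onFun Disjoint
      (fun j => ev τ n₀ x j ∩ {ω | (∑ i ∈ Finset.Ico j k, τ i ω) = 0})) := by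
    intro j _ j' _ hne
    refine Set.disjoint_left.mpr fun ω h1 h2 => ev_disj τ n₀ x hne h1.1 h2.1
  rw [measure_biUnion_finset hdisj hmeasTerm]
  rw [ENNReal.toReal_sum (fun j _ => measure_ne_top P _)]
  refine Finset.sum_congr rfl fun j hj => ?_
  have hjk : j ≤ k := by simpa using Nat.lt_succ_iff.mp (Finset.mem_range.mp hj)
  rw [ev_indep P τ hmeas hindep n₀ x j k,
    prob_Ico_sum_zero P τ hmeas hindep hident hjk, ENNReal.toReal_mul]

end Aux


/-- The first hitting time of `0` by the walk `x + S k`, valued in `ℕ∞`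
(`⊤` if the walk never hits `0`). -/
noncomputable def hitTime {Ω : Type*} (S : ℕ → Ω → ℤ) (x : ℤ) (ω : Ω) : ℕ∞ :=
  ⨅ (k : ℕ) (_ : x + S k ω = 0), (k : ℕ∞)

/-- With `(τ n)` i.i.d. integer-valued, `S` the associated random walk,
`σ_x` the first hitting time of `0` by the walk started at `x`, and
`u_s(y) = ∑_{k ≥ 0} s^k P{S k = -y}`, for every `x ∈ ℤ` and `|s| < 1`,
`E[s^{σ_x} 1_{σ_x < ∞}] = u_s(x) / u_s(0)`. -/
theorem statement2
    {Ω : Type*} [MeasurableSpace Ω] (P : Measure Ω) [IsProbabilityMeasure P]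
    (τ : ℕ → Ω → ℤ) (hmeas : ∀ n, Measurable (τ n))
    (hindep : iIndepFun τ P)
    (hident : ∀ n, IdentDistrib (τ n) (τ 0) P P)
    (S : ℕ → Ω → ℤ) (hS : ∀ k ω, S k ω = ∑ i ∈ Finset.range k, τ i ω)
    (x : ℤ) (s : ℝ) (hs : |s| < 1) :
    (∫ ω, (if hitTime S x ω = ⊤ then (0 : ℝ) else s ^ (hitTime S x ω).toNat) ∂P) =
      (∑' k : ℕ, s ^ k * (P {ω | S k ω = -x}).toReal) /
        (∑' k : ℕ, s ^ k * (P {ω | S k ω = 0}).toReal) := by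
  classical
  set a : ℕ → ℝ := fun j => (P (ev τ 0 x j)).toReal with ha
  set b : ℕ → ℝ := fun m => (P {ω | (∑ i ∈ range m, τ i ω) = 0}).toReal with hb
  set c : ℕ → ℝ := fun j => (P (ev τ 1 0 j)).toReal with hc
  have htoReal_le : ∀ E : Set Ω, (P E).toReal ≤ 1 := by
    intro E
    have h1 : P E ≤ 1 := prob_le_one
    exact ENNReal.toReal_le_of_le_ofReal zero_le_one (by simpa using h1)
  have hgeom : Summable (fun n : ℕ => |s| ^ n) :=
    summable_geometric_of_lt_one (abs_nonneg s) hs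
  have hsummable : ∀ (p : ℕ → ℝ), (∀ n, 0 ≤ p n) → (∀ n, p n ≤ 1) →
      Summable (fun n => ‖s ^ n * p n‖) := by
    intro p h0 h1
    refine Summable.of_nonneg_of_le (fun n => norm_nonneg _) (fun n => ?_) hgeom
    rw [norm_mul, norm_pow, Real.norm_eq_abs, Real.norm_eq_abs]
    calc |s| ^ n * |p n| ≤ |s| ^ n * 1 := by
          gcongr
          rw [abs_of_nonneg (h0 n)]; exact h1 n
      _ = |s| ^ n := mul_one _
  have hfa : Summable (fun n => ‖s ^ n * a n‖) :=
    hsummable a (fun n => ENNReal.toReal_nonneg) (fun n => htoReal_le _)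
  have hfb : Summable (fun n => ‖s ^ n * b n‖) :=
    hsummable b (fun n => ENNReal.toReal_nonneg) (fun n => htoReal_le _)
  have hfc : Summable (fun n => ‖s ^ n * c n‖) :=
    hsummable c (fun n => ENNReal.toReal_nonneg) (fun n => htoReal_le _)
  -- pointwise identity for the integrand
  have hpt : ∀ ω, (if hitTime S x ω = ⊤ then (0 : ℝ) else s ^ (hitTime S x ω).toNat) =
      ∑' j : ℕ, Set.indicator (ev τ 0 x j) (fun _ => s ^ j) ω := by
    intro ω
    by_cases hex : ∃ k, (∑ i ∈ range k, τ i ω) = -x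
    · have hspec := Nat.find_spec hex
      have hmin : ∀ i, i < Nat.find hex → ¬ (∑ i' ∈ range i, τ i' ω) = -x :=
        fun i hi => Nat.find_min hex hi
      have hmin' : ∀ k, (∑ i' ∈ range k, τ i' ω) = -x → Nat.find hex ≤ k :=
        fun k hk => Nat.find_min' hex hk
      obtain ⟨j, hjdef⟩ : ∃ j, Nat.find hex = j := ⟨_, rfl⟩
      rw [hjdef] at hspec hmin hmin'
      have hval : hitTime S x ω = (j : ℕ∞) := by
        apply le_antisymm
        · exact iInf₂_le j (by rw [hS]; omega)
        · refine le_iInf₂ fun k hk => ?_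
          have : j ≤ k := hmin' k (by rw [hS] at hk; omega)
          exact_mod_cast this
      have hmem : ω ∈ ev τ 0 x j :=
        ⟨Nat.zero_le _, hspec, fun i _ hij hcon => hmin i hij hcon⟩
      rw [hval]
      have h1 : ((j : ℕ∞) = ⊤) = False := by simp
      rw [if_neg (by simp)]
      rw [tsum_eq_single j (fun j' hj' =>
        Set.indicator_of_notMem (fun hmem' => absurd (ev_disj τ 0 x hj' hmem' hmem) id) _)]
      rw [Set.indicator_of_mem hmem]
      simp
    · have hval : hitTime S x ω = ⊤ := by
        rw [hitTime, iInf_eq_top]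
        intro k
        rw [iInf_eq_top]
        intro hk
        exact absurd ⟨k, by rw [hS] at hk; omega⟩ hex
      rw [if_pos hval]
      have : ∀ j : ℕ, Set.indicator (ev τ 0 x j) (fun _ => s ^ j) ω = 0 := by
        intro j
        exact Set.indicator_of_notMem (fun hmem => hex ⟨j, hmem.2.1⟩) _
      simp only [this, tsum_zero]
  -- integral computation
  have hLHS : (∫ ω, (if hitTime S x ω = ⊤ then (0 : ℝ) else s ^ (hitTime S x ω).toNat) ∂P) =
      ∑' j : ℕ, s ^ j * a j := by
    have heq : (fun ω => if hitTime S x ω = ⊤ then (0 : ℝ) else s ^ (hitTime S x ω).toNat) =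
        fun ω => ∑' j : ℕ, Set.indicator (ev τ 0 x j) (fun _ => s ^ j) ω := funext hpt
    rw [heq]
    have hint : ∀ j : ℕ, Integrable (Set.indicator (ev τ 0 x j) (fun _ => s ^ j)) P :=
      fun j => (integrable_const (s ^ j)).indicator (ev_measurable τ hmeas 0 x j)
    have hnorm : ∀ j : ℕ, (∫ ω, ‖Set.indicator (ev τ 0 x j) (fun _ => s ^ j) ω‖ ∂P) =
        a j * |s| ^ j := by
      intro j
      have : (fun ω => ‖Set.indicator (ev τ 0 x j) (fun _ => s ^ j) ω‖) =
          Set.indicator (ev τ 0 x j) (fun _ => ‖s ^ j‖) := by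
        funext ω
        rw [norm_indicator_eq_indicator_norm]
      rw [this, integral_indicator_const _ (ev_measurable τ hmeas 0 x j)]
      simp [smul_eq_mul, abs_pow, ha, measureReal_def]
    have hsum2 : Summable (fun j : ℕ =>
        ∫ ω, ‖Set.indicator (ev τ 0 x j) (fun _ => s ^ j) ω‖ ∂P) := by
      simp only [hnorm]
      refine Summable.of_nonneg_of_le (fun n => ?_) (fun n => ?_) hgeom
      · positivity
      · calc a n * |s| ^ n ≤ 1 * |s| ^ n := by
              gcongr; exact htoReal_le _
          _ = |s| ^ n := one_mul _
    rw [← integral_tsum_of_summable_integral_norm hint hsum2]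
    refine tsum_congr fun j => ?_
    rw [integral_indicator_const _ (ev_measurable τ hmeas 0 x j), smul_eq_mul, mul_comm]; rfl
  rw [hLHS]
  -- rewrite the sets in the RHS
  have hset1 : ∀ k : ℕ, {ω | S k ω = -x} = {ω | (∑ i ∈ range k, τ i ω) = -x} := by
    intro k; ext ω; simp [hS]
  have hset0 : ∀ k : ℕ, {ω | S k ω = 0} = {ω | (∑ i ∈ range k, τ i ω) = 0} := by
    intro k; ext ω; simp [hS]
  simp only [hset1, hset0]
  -- numerator Cauchy product
  have hb0 : b 0 = 1 := by
    have : {ω : Ω | (∑ i ∈ range 0, τ i ω) = 0} = Set.univ := by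
      ext ω; simp
    simp [hb, this]
  have hc0 : c 0 = 0 := by
    have : ev τ 1 0 0 = (∅ : Set Ω) := by
      ext ω; simp [ev]
    simp [hc, this]
  have hnum : (∑' k : ℕ, s ^ k * (P {ω | (∑ i ∈ range k, τ i ω) = -x}).toReal) =
      (∑' j : ℕ, s ^ j * a j) * (∑' m : ℕ, s ^ m * b m) := by
    rw [tsum_mul_tsum_eq_tsum_sum_range_of_summable_norm hfa hfb]
    refine tsum_congr fun k => ?_
    rw [decomp P τ hmeas hindep hident 0 x (Nat.zero_le k), Finset.mul_sum]
    refine Finset.sum_congr rfl fun j hj => ?_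
    have hjk : j ≤ k := Nat.lt_succ_iff.mp (Finset.mem_range.mp hj)
    have : s ^ k = s ^ j * s ^ (k - j) := by
      rw [← pow_add, Nat.add_sub_cancel' hjk]
    rw [this]; ring
  -- denominator analysis
  set D : ℝ := ∑' m : ℕ, s ^ m * b m with hD
  have hDsummable : Summable (fun m : ℕ => s ^ m * b m) := hfb.of_norm
  have huseq := summable_norm_sum_mul_range_of_summable_norm hfc hfb
  have hGD : (∑' j : ℕ, s ^ j * c j) * D = D - 1 := by
    rw [hD, tsum_mul_tsum_eq_tsum_sum_range_of_summable_norm hfc hfb]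
    have hu : ∀ n : ℕ, (∑ j ∈ range (n+1), (s ^ j * c j) * (s ^ (n-j) * b (n-j))) =
        (if n = 0 then 0 else s ^ n * b n) := by
      intro n
      cases n with
      | zero => simp [hc0]
      | succ m =>
        rw [if_neg (Nat.succ_ne_zero m)]
        have hd' : b (m+1) = ∑ j ∈ range (m+1+1), c j * b (m+1-j) := by
          have hd := decomp P τ hmeas hindep hident 1 0 (k := m + 1) (by omega)
          rw [neg_zero] at hd
          exact hd
        rw [hd', Finset.mul_sum]
        refine (Finset.sum_congr rfl fun j hj => ?_).symm
        have hjk : j ≤ m + 1 := Nat.lt_succ_iff.mp (Finset.mem_range.mp hj)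
        have hpow : s ^ (m+1) = s ^ j * s ^ (m+1-j) := by
          rw [← pow_add, Nat.add_sub_cancel' hjk]
        rw [hpow]
        ring
    have husum : Summable (fun n : ℕ =>
        ∑ j ∈ range (n+1), (s ^ j * c j) * (s ^ (n-j) * b (n-j))) := huseq.of_norm
    calc (∑' n : ℕ, ∑ j ∈ range (n+1), (s ^ j * c j) * (s ^ (n-j) * b (n-j)))
        = ∑' n : ℕ, (if n = 0 then (0:ℝ) else s ^ n * b n) := tsum_congr hu
      _ = D - 1 := by
          have h2 : Summable (fun n : ℕ => if n = 0 then (0:ℝ) else s ^ n * b n) := by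
            refine Summable.of_norm ?_
            refine Summable.of_nonneg_of_le (fun n => norm_nonneg _) (fun n => ?_) hfb
            cases n with
            | zero => simp [norm_nonneg]
            | succ m => simp
          rw [h2.tsum_eq_zero_add, hD, hDsummable.tsum_eq_zero_add]
          simp [hb0]
  have hDne : D ≠ 0 := by
    intro h
    rw [h, mul_zero] at hGD
    norm_num at hGD
  rw [hnum, mul_div_cancel_right₀ _ hDne]
end

section
/- For every bounded function f : ℤ → ℝ, every x ∈ ℤ and every real s with |s| < 1, ∑_{k≥0} s^k E[f(x + S(k))] = E[∑_{k=0}^{σ_x − 1} s^k f(x + S(k))] + E[s^{σ_x} 1_{σ_x < ∞}] · ∑_{k≥0} s^k E[f(S(k))], where in the first expectation on the right-hand side the sum runs over all k ∈ ℕ₀ on the event {σ_x = ∞}. -/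
open MeasureTheory ProbabilityTheory

lemma hitTime_le {Ω : Type*} {S : ℕ → Ω → ℤ} {x : ℤ} {ω : Ω} {i : ℕ}
    (h : x + S i ω = 0) : hitTime S x ω ≤ i :=
  iInf_le_of_le i (by simp [h])

lemma lt_hitTime_iff {Ω : Type*} {S : ℕ → Ω → ℤ} {x : ℤ} {ω : Ω} {k : ℕ} :
    (k : ℕ∞) < hitTime S x ω ↔ ∀ i ≤ k, x + S i ω ≠ 0 := by
  constructor
  · intro h i hi h0
    exact absurd ((hitTime_le h0).trans_lt (lt_of_le_of_lt (by exact_mod_cast hi) h)) (lt_irrefl _)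
  · intro h
    have h1 : ((k+1 : ℕ) : ℕ∞) ≤ hitTime S x ω := by
      refine le_iInf fun m => le_iInf fun h0 => ?_
      by_contra hc
      push_neg at hc
      have hm : m ≤ k := by exact_mod_cast (Nat.lt_succ_iff.mp (by exact_mod_cast hc))
      exact h m hm h0
    exact lt_of_lt_of_le (by exact_mod_cast Nat.lt_succ_self k) h1

lemma hitTime_eq_top_iff {Ω : Type*} {S : ℕ → Ω → ℤ} {x : ℤ} {ω : Ω} :
    hitTime S x ω = ⊤ ↔ ∀ k, x + S k ω ≠ 0 := by
  simp [hitTime, iInf_eq_top]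

lemma hitTime_eq_coe_iff {Ω : Type*} {S : ℕ → Ω → ℤ} {x : ℤ} {ω : Ω} {j : ℕ} :
    hitTime S x ω = (j : ℕ∞) ↔ (x + S j ω = 0 ∧ ∀ i < j, x + S i ω ≠ 0) := by
  constructor
  · intro h
    have hne : ∀ i < j, x + S i ω ≠ 0 := by
      intro i hi h0
      have := hitTime_le h0
      rw [h] at this
      exact absurd (by exact_mod_cast this) (Nat.not_le.mpr hi)
    refine ⟨?_, hne⟩
    by_contra h0
    have : (j : ℕ∞) < hitTime S x ω := by
      rw [lt_hitTime_iff]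
      intro i hi
      rcases lt_or_eq_of_le hi with hi' | rfl
      · exact hne i hi'
      · exact h0
    rw [h] at this; exact lt_irrefl _ this
  · rintro ⟨h0, hne⟩
    have hub : hitTime S x ω ≤ j := hitTime_le h0
    rcases Nat.eq_zero_or_pos j with rfl | hj
    · exact le_antisymm hub (by simp)
    · have hlt : ((j-1 : ℕ) : ℕ∞) < hitTime S x ω := by
        rw [lt_hitTime_iff]
        intro i hi
        exact hne i (lt_of_le_of_lt (by exact_mod_cast hi) (Nat.sub_lt hj one_pos))
      refine le_antisymm hub ?_
      have : ((j-1 : ℕ) : ℕ∞) + 1 ≤ hitTime S x ω := Order.add_one_le_of_lt hlt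
      calc (j : ℕ∞) = ((j-1 : ℕ) : ℕ∞) + 1 := by
            have := Nat.succ_pred_eq_of_pos hj
            exact_mod_cast congrArg (Nat.cast : ℕ → ℕ∞) this.symm
        _ ≤ hitTime S x ω := this

lemma identDistrib_add_of_indepFun {Ω : Type*} [MeasurableSpace Ω] {P : Measure Ω}
    [IsFiniteMeasure P] {X Y X' Y' : Ω → ℤ}
    (h1 : IdentDistrib X X' P P) (h2 : IdentDistrib Y Y' P P)
    (hi : IndepFun X Y P) (hi' : IndepFun X' Y' P) :
    IdentDistrib (fun ω => X ω + Y ω) (fun ω => X' ω + Y' ω) P P := by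
  have hp : IdentDistrib (fun ω => (X ω, Y ω)) (fun ω => (X' ω, Y' ω)) P P := by
    refine ⟨h1.aemeasurable_fst.prodMk h2.aemeasurable_fst,
      h1.aemeasurable_snd.prodMk h2.aemeasurable_snd, ?_⟩
    rw [(indepFun_iff_map_prod_eq_prod_map_map h1.aemeasurable_fst h2.aemeasurable_fst).mp hi,
      (indepFun_iff_map_prod_eq_prod_map_map h1.aemeasurable_snd h2.aemeasurable_snd).mp hi',
      h1.map_eq, h2.map_eq]
  exact hp.comp measurable_add

lemma identDistrib_shift_sum {Ω : Type*} [MeasurableSpace Ω] {P : Measure Ω}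
    [IsProbabilityMeasure P] {τ : ℕ → Ω → ℤ} (hmeas : ∀ n, Measurable (τ n))
    (hindep : iIndepFun τ P)
    (hident : ∀ n, IdentDistrib (τ n) (τ 0) P P) (j : ℕ) :
    ∀ m : ℕ, IdentDistrib (fun ω => ∑ i ∈ Finset.range m, τ (j + i) ω)
      (fun ω => ∑ i ∈ Finset.range m, τ i ω) P P := by
  intro m
  induction m with
  | zero => simp only [Finset.range_zero, Finset.sum_empty]; exact IdentDistrib.refl aemeasurable_const
  | succ m ih =>
    have hXY : IndepFun (fun ω => ∑ i ∈ Finset.range m, τ (j + i) ω) (τ (j + m)) P := by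
      have hs : (j + m) ∉ (Finset.range m).image (fun i => j + i) := by
        simp only [Finset.mem_image, Finset.mem_range]
        rintro ⟨i, hi, he⟩
        omega
      have := hindep.indepFun_finset_sum_of_notMem hmeas hs
      have he : (∑ i ∈ (Finset.range m).image (fun i => j + i), τ i) =
          fun ω => ∑ i ∈ Finset.range m, τ (j + i) ω := by
        funext ω
        rw [Finset.sum_apply]
        exact Finset.sum_image (fun a _ b _ h => by omega)
      rwa [he] at this
    have hXY' : IndepFun (fun ω => ∑ i ∈ Finset.range m, τ i ω) (τ m) P := by
      have := hindep.indepFun_finset_sum_of_notMem hmeas (Finset.notMem_range_self (n := m))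
      have he : (∑ i ∈ Finset.range m, τ i) = fun ω => ∑ i ∈ Finset.range m, τ i ω := by
        funext ω; rw [Finset.sum_apply]
      rwa [he] at this
    have h2 : IdentDistrib (τ (j + m)) (τ m) P P := (hident (j + m)).trans (hident m).symm
    have := identDistrib_add_of_indepFun ih h2 hXY hXY'
    simp only [Finset.sum_range_succ]
    exact this

lemma integrable_of_bdd {Ω : Type*} [MeasurableSpace Ω] {P : Measure Ω}
    [IsProbabilityMeasure P] {h : Ω → ℝ} {M : ℝ} (mh : Measurable h)
    (bh : ∀ ω, |h ω| ≤ M) : Integrable h P :=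
  ⟨mh.aestronglyMeasurable, HasFiniteIntegral.of_bounded
    (ae_of_all _ (fun ω => by simpa [Real.norm_eq_abs] using bh ω))⟩

lemma hit_integral_factor {Ω : Type*} [MeasurableSpace Ω] {P : Measure Ω}
    [IsProbabilityMeasure P] {τ : ℕ → Ω → ℤ} (hmeas : ∀ n, Measurable (τ n))
    (hindep : iIndepFun τ P)
    (hident : ∀ n, IdentDistrib (τ n) (τ 0) P P)
    {S : ℕ → Ω → ℤ} (hS : ∀ k ω, S k ω = ∑ i ∈ Finset.range k, τ i ω)
    (f : ℤ → ℝ) {M : ℝ} (hM : ∀ y, |f y| ≤ M) (x : ℤ)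
    {j k : ℕ} (hjk : j ≤ k) :
    ∫ ω, (if hitTime S x ω = (j : ℕ∞) then f (x + S k ω) else 0) ∂P
      = (P {ω | hitTime S x ω = (j : ℕ∞)}).toReal * ∫ ω, f (S (k - j) ω) ∂P := by
  classical
  have mf : Measurable f := measurable_of_countable f
  set m := k - j with hm
  set F : (Fin j → ℤ) → ℕ → ℤ := fun v i => if h : i < j then v ⟨i, h⟩ else 0 with hF
  set C : Set (Fin j → ℤ) :=
    {v | x + ∑ i ∈ Finset.range j, F v i = 0 ∧
      ∀ l < j, x + ∑ i ∈ Finset.range l, F v i ≠ 0} with hC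
  set χ : (Fin j → ℤ) → ℝ := C.indicator fun _ => 1 with hχ
  set g1 : Ω → (Fin j → ℤ) := fun ω i => τ i ω with hg1
  set g2 : Ω → ℤ := fun ω => ∑ i ∈ Finset.Ico j k, τ i ω with hg2
  have mg1 : Measurable g1 := measurable_pi_lambda _ fun i => hmeas i
  have mg2 : Measurable g2 := Finset.measurable_sum _ fun i _ => hmeas i
  have mχ : Measurable χ := measurable_of_countable χ
  -- partial sums of F ∘ g1 recover S
  have key1 : ∀ ω, ∀ l ≤ j, ∑ i ∈ Finset.range l, F (g1 ω) i = S l ω := by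
    intro ω l hl
    rw [hS l ω]
    refine Finset.sum_congr rfl fun i hi => ?_
    have : i < j := lt_of_lt_of_le (Finset.mem_range.mp hi) hl
    simp [hF, this, hg1]
  have key2 : ∀ ω, g1 ω ∈ C ↔ hitTime S x ω = (j : ℕ∞) := by
    intro ω
    rw [hitTime_eq_coe_iff]
    constructor
    · rintro ⟨h1, h2⟩
      exact ⟨by rw [← key1 ω j le_rfl]; exact h1,
        fun i hi => by rw [← key1 ω i hi.le]; exact h2 i hi⟩
    · rintro ⟨h1, h2⟩
      exact ⟨by rw [key1 ω j le_rfl]; exact h1,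
        fun i hi => by rw [key1 ω i hi.le]; exact h2 i hi⟩
  have key3 : ∀ ω, hitTime S x ω = (j : ℕ∞) → x + S k ω = g2 ω := by
    intro ω h
    have h0 : x + S j ω = 0 := (hitTime_eq_coe_iff.mp h).1
    have : S k ω = S j ω + g2 ω := by
      rw [hS k ω, hS j ω, Finset.range_eq_Ico,
        ← Finset.sum_Ico_consecutive (fun i => τ i ω) (Nat.zero_le j) hjk]
      rw [hg2, ← Finset.range_eq_Ico]
    rw [this, ← add_assoc, h0, zero_add]
  have keyPt : ∀ ω, (if hitTime S x ω = (j : ℕ∞) then f (x + S k ω) else 0)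
      = χ (g1 ω) * f (g2 ω) := by
    intro ω
    by_cases h : hitTime S x ω = (j : ℕ∞)
    · rw [if_pos h, key3 ω h]
      have : χ (g1 ω) = 1 := Set.indicator_of_mem ((key2 ω).mpr h) _
      rw [this, one_mul]
    · rw [if_neg h]
      have : χ (g1 ω) = 0 := Set.indicator_of_notMem (fun hc => h ((key2 ω).mp hc)) _
      rw [this, zero_mul]
  -- independence
  have hdisj : Disjoint (Finset.range j) (Finset.Ico j k) := by
    simp only [Finset.disjoint_left, Finset.mem_range, Finset.mem_Ico]
    omega
  have base := hindep.indepFun_finset (Finset.range j) (Finset.Ico j k) hdisj hmeas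
  set φ1 : ({i // i ∈ Finset.range j} → ℤ) → (Fin j → ℤ) :=
    fun v i => v ⟨(i : ℕ), Finset.mem_range.mpr i.isLt⟩ with hφ1
  set φ2 : ({i // i ∈ Finset.Ico j k} → ℤ) → ℤ := fun v => ∑ i, v i with hφ2
  have mφ1 : Measurable φ1 := measurable_pi_lambda _ fun i => measurable_pi_apply _
  have mφ2 : Measurable φ2 := Finset.measurable_sum _ fun i _ => measurable_pi_apply _
  have hIndep : IndepFun (fun ω => χ (g1 ω)) (fun ω => f (g2 ω)) P := by
    have := base.comp (mχ.comp mφ1) (mf.comp mφ2)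
    have e1 : ((χ ∘ φ1) ∘ fun a (i : Finset.range j) => τ i a) = fun ω => χ (g1 ω) := rfl
    have e2 : ((f ∘ φ2) ∘ fun a (i : Finset.Ico j k) => τ i a) = fun ω => f (g2 ω) := by
      funext ω
      simp only [Function.comp_apply, hφ2, hg2]
      congr 1
      exact Finset.sum_coe_sort (Finset.Ico j k) (fun i => τ i ω)
    rwa [e1, e2] at this
  -- integrability
  have int1 : Integrable (fun ω => χ (g1 ω)) P := by
    refine integrable_of_bdd (M := 1) (mχ.comp mg1) fun ω => ?_
    by_cases h : g1 ω ∈ C <;> simp [hχ, Set.indicator, h]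
  have int2 : Integrable (fun ω => f (g2 ω)) P :=
    integrable_of_bdd (mf.comp mg2) fun ω => hM _
  calc ∫ ω, (if hitTime S x ω = (j : ℕ∞) then f (x + S k ω) else 0) ∂P
      = ∫ ω, χ (g1 ω) * f (g2 ω) ∂P := by
        exact integral_congr_ae (ae_of_all _ keyPt)
    _ = (∫ ω, χ (g1 ω) ∂P) * ∫ ω, f (g2 ω) ∂P :=
        hIndep.integral_fun_mul_eq_mul_integral int1.aestronglyMeasurable int2.aestronglyMeasurable
    _ = (P {ω | hitTime S x ω = (j : ℕ∞)}).toReal * ∫ ω, f (S (k - j) ω) ∂P := by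
        congr 1
        · have e : (fun ω => χ (g1 ω)) = (g1 ⁻¹' C).indicator (1 : Ω → ℝ) := by
            funext ω
            by_cases h : g1 ω ∈ C <;> simp [hχ, Set.indicator, h]
          have hpre : g1 ⁻¹' C = {ω | hitTime S x ω = (j : ℕ∞)} := by
            ext ω; exact key2 ω
          have hms : MeasurableSet {ω | hitTime S x ω = (j : ℕ∞)} :=
            hpre ▸ mg1 ((Set.to_countable C).measurableSet)
          rw [e, hpre, integral_indicator_one hms]
          rfl
        · have hid := identDistrib_shift_sum hmeas hindep hident j m
          have e : g2 = fun ω => ∑ i ∈ Finset.range m, τ (j + i) ω := by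
            funext ω
            show ∑ i ∈ Finset.Ico j k, τ i ω = _
            rw [Finset.sum_Ico_eq_sum_range]
          rw [e]
          calc ∫ ω, f (∑ i ∈ Finset.range m, τ (j + i) ω) ∂P
              = ∫ ω, f (∑ i ∈ Finset.range m, τ i ω) ∂P := (hid.comp mf).integral_eq
            _ = ∫ ω, f (S m ω) ∂P :=
                integral_congr_ae (ae_of_all _ fun ω => by simp only [hS])

/-- With `(τ n)` i.i.d. integer-valued, `S` the associated random walk and
`σ_x` the first hitting time of `0` by the walk started at `x`, for every bounded
`f : ℤ → ℝ`, every `x ∈ ℤ` and every `|s| < 1`,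
`∑_{k ≥ 0} s^k E[f(x + S k)] = E[∑_{k=0}^{σ_x - 1} s^k f(x + S k)]
  + E[s^{σ_x} 1_{σ_x < ∞}] ∑_{k ≥ 0} s^k E[f(S k)]`,
where on `{σ_x = ∞}` the inner sum runs over all `k ∈ ℕ`. -/
theorem statement4
    {Ω : Type*} [MeasurableSpace Ω] (P : Measure Ω) [IsProbabilityMeasure P]
    (τ : ℕ → Ω → ℤ) (hmeas : ∀ n, Measurable (τ n))
    (hindep : iIndepFun τ P)
    (hident : ∀ n, IdentDistrib (τ n) (τ 0) P P)
    (S : ℕ → Ω → ℤ) (hS : ∀ k ω, S k ω = ∑ i ∈ Finset.range k, τ i ω)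
    (f : ℤ → ℝ) (hf : ∃ M, ∀ y, |f y| ≤ M)
    (x : ℤ) (s : ℝ) (hs : |s| < 1) :
    (∑' k : ℕ, s ^ k * ∫ ω, f (x + S k ω) ∂P) =
      (∫ ω, (∑' k : ℕ,
          if (k : ℕ∞) < hitTime S x ω then s ^ k * f (x + S k ω) else 0) ∂P) +
        (∫ ω, (if hitTime S x ω = ⊤ then (0 : ℝ) else s ^ (hitTime S x ω).toNat) ∂P) *
          ∑' k : ℕ, s ^ k * ∫ ω, f (S k ω) ∂P := by
  classical
  obtain ⟨M, hM⟩ := hf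
  have hM0 : 0 ≤ M := le_trans (abs_nonneg _) (hM 0)
  have mf : Measurable f := measurable_of_countable f
  have mS : ∀ k, Measurable (S k) := fun k => by
    have e : S k = fun ω => ∑ i ∈ Finset.range k, τ i ω := funext fun ω => hS k ω
    rw [e]; exact Finset.measurable_sum _ fun i _ => hmeas i
  have m0 : ∀ i : ℕ, MeasurableSet {ω | x + S i ω = 0} := fun i =>
    (measurable_const.add (mS i)) (measurableSet_singleton (0 : ℤ))
  have mEq : ∀ j : ℕ, MeasurableSet {ω | hitTime S x ω = (j : ℕ∞)} := fun j => by
    have e : {ω | hitTime S x ω = (j : ℕ∞)} =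
        {ω | x + S j ω = 0} ∩ ⋂ i, ⋂ (_ : i < j), {ω | x + S i ω = 0}ᶜ := by
      ext ω
      simp only [Set.mem_setOf_eq, Set.mem_inter_iff, Set.mem_iInter, Set.mem_compl_iff,
        hitTime_eq_coe_iff]
    rw [e]
    exact (m0 j).inter (MeasurableSet.iInter fun i => MeasurableSet.iInter fun _ => (m0 i).compl)
  have mLt : ∀ k : ℕ, MeasurableSet {ω | (k : ℕ∞) < hitTime S x ω} := fun k => by
    have e : {ω | (k : ℕ∞) < hitTime S x ω} =
        ⋂ i, ⋂ (_ : i ≤ k), {ω | x + S i ω = 0}ᶜ := by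
      ext ω
      simp only [Set.mem_setOf_eq, Set.mem_iInter, Set.mem_compl_iff, lt_hitTime_iff]
    rw [e]
    exact MeasurableSet.iInter fun i => MeasurableSet.iInter fun _ => (m0 i).compl
  -- abbreviations
  set p : ℕ → ℝ := fun j => (P {ω | hitTime S x ω = (j : ℕ∞)}).toReal with hp
  set b : ℕ → ℝ := fun k => ∫ ω, f (S k ω) ∂P with hb
  set g : ℕ → ℝ := fun k =>
    ∫ ω, (if (k : ℕ∞) < hitTime S x ω then f (x + S k ω) else 0) ∂P with hg
  have hp0 : ∀ j, 0 ≤ p j := fun j => ENNReal.toReal_nonneg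
  have hp1 : ∀ j, p j ≤ 1 := fun j => by
    rw [hp]
    exact ENNReal.toReal_le_of_le_ofReal one_pos.le (by simpa using prob_le_one)
  have hbM : ∀ k, |b k| ≤ M := fun k => by
    have := norm_integral_le_of_norm_le_const (μ := P)
      (f := fun ω => f (S k ω)) (C := M) (ae_of_all _ fun ω => by simpa using hM _)
    simpa [measure_univ] using this
  have hgM : ∀ k, |g k| ≤ M := fun k => by
    have := norm_integral_le_of_norm_le_const (μ := P)
      (f := fun ω => (if (k : ℕ∞) < hitTime S x ω then f (x + S k ω) else 0)) (C := M)
      (ae_of_all _ fun ω => by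
        by_cases h : (k : ℕ∞) < hitTime S x ω
        · simpa [h, Real.norm_eq_abs] using hM _
        · simp [h, Real.norm_eq_abs, hM0])
    simpa [measure_univ] using this
  -- integrabilities
  have intA : ∀ k, Integrable (fun ω => f (x + S k ω)) P := fun k =>
    integrable_of_bdd (mf.comp (measurable_const.add (mS k))) fun ω => hM _
  have intG : ∀ k : ℕ, Integrable
      (fun ω => if (k : ℕ∞) < hitTime S x ω then f (x + S k ω) else 0) P := fun k => by
    refine integrable_of_bdd (M := M)
      (Measurable.ite (mLt k) (mf.comp (measurable_const.add (mS k))) measurable_const)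
      fun ω => ?_
    by_cases h : (k : ℕ∞) < hitTime S x ω
    · simpa [h] using hM _
    · simp [h, hM0]
  have intJ : ∀ j k : ℕ, Integrable
      (fun ω => if hitTime S x ω = (j : ℕ∞) then f (x + S k ω) else 0) P := fun j k => by
    refine integrable_of_bdd (M := M)
      (Measurable.ite (mEq j) (mf.comp (measurable_const.add (mS k))) measurable_const)
      fun ω => ?_
    by_cases h : hitTime S x ω = (j : ℕ∞)
    · simpa [h] using hM _
    · simp [h, hM0]
  -- Step D : renewal decomposition of each coefficient
  have stepD : ∀ k, (∫ ω, f (x + S k ω) ∂P) =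
      g k + ∑ j ∈ Finset.range (k + 1), p j * b (k - j) := by
    intro k
    have ptw : ∀ ω, f (x + S k ω) =
        (if (k : ℕ∞) < hitTime S x ω then f (x + S k ω) else 0)
          + ∑ j ∈ Finset.range (k + 1),
            (if hitTime S x ω = (j : ℕ∞) then f (x + S k ω) else 0) := by
      intro ω
      by_cases h : (k : ℕ∞) < hitTime S x ω
      · rw [if_pos h, Finset.sum_eq_zero, add_zero]
        intro j hj
        rw [if_neg]
        intro hc
        rw [hc] at h
        have hjk : j ≤ k := Finset.mem_range_succ_iff.mp hj
        exact absurd h (not_lt.mpr (by exact_mod_cast hjk))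
      · rw [if_neg h, zero_add]
        have hle : hitTime S x ω ≤ (k : ℕ∞) := not_lt.mp h
        have hne : hitTime S x ω ≠ ⊤ := fun hc => by
          rw [hc] at hle
          exact absurd hle (by simp)
        obtain ⟨n, hn⟩ : ∃ n : ℕ, hitTime S x ω = (n : ℕ∞) :=
          ⟨(hitTime S x ω).toNat, (ENat.coe_toNat hne).symm⟩
        have hnk : n ≤ k := by rw [hn] at hle; exact_mod_cast hle
        rw [Finset.sum_eq_single n]
        · rw [hn, if_pos rfl]
        · intro j hj hjn
          rw [hn, if_neg]
          intro hc
          exact hjn (Nat.cast_injective hc).symm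
        · intro hn'
          exact absurd (Finset.mem_range_succ_iff.mpr hnk) hn'
    calc (∫ ω, f (x + S k ω) ∂P)
        = ∫ ω, ((if (k : ℕ∞) < hitTime S x ω then f (x + S k ω) else 0)
            + ∑ j ∈ Finset.range (k + 1),
              (if hitTime S x ω = (j : ℕ∞) then f (x + S k ω) else 0)) ∂P :=
          integral_congr_ae (ae_of_all _ ptw)
      _ = g k + ∫ ω, (∑ j ∈ Finset.range (k + 1),
              (if hitTime S x ω = (j : ℕ∞) then f (x + S k ω) else 0)) ∂P := by
          rw [integral_add (intG k) (integrable_finset_sum _ fun j _ => intJ j k)]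
      _ = g k + ∑ j ∈ Finset.range (k + 1),
            ∫ ω, (if hitTime S x ω = (j : ℕ∞) then f (x + S k ω) else 0) ∂P := by
          rw [integral_finset_sum (Finset.range (k + 1)) (fun j _ => intJ j k)]
      _ = g k + ∑ j ∈ Finset.range (k + 1), p j * b (k - j) := by
          congr 1
          refine Finset.sum_congr rfl fun j hj => ?_
          exact hit_integral_factor hmeas hindep hident hS f hM x
            (Finset.mem_range_succ_iff.mp hj)
  -- summabilities
  have hgeo : Summable fun k : ℕ => |s| ^ k :=
    summable_geometric_of_lt_one (abs_nonneg s) hs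
  have hunorm : Summable fun j : ℕ => ‖s ^ j * p j‖ := by
    refine Summable.of_nonneg_of_le (fun j => norm_nonneg _) (fun j => ?_) hgeo
    rw [norm_mul, norm_pow, Real.norm_eq_abs, Real.norm_eq_abs, abs_of_nonneg (hp0 j)]
    calc |s| ^ j * p j ≤ |s| ^ j * 1 :=
          mul_le_mul_of_nonneg_left (hp1 j) (pow_nonneg (abs_nonneg s) j)
      _ = |s| ^ j := mul_one _
  have hvnorm : Summable fun k : ℕ => ‖s ^ k * b k‖ := by
    refine Summable.of_nonneg_of_le (fun k => norm_nonneg _) (fun k => ?_) (hgeo.mul_right M)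
    rw [norm_mul, norm_pow, Real.norm_eq_abs, Real.norm_eq_abs]
    exact mul_le_mul_of_nonneg_left (hbM k) (pow_nonneg (abs_nonneg s) k)
  have hwnorm : Summable fun k : ℕ => ‖s ^ k * g k‖ := by
    refine Summable.of_nonneg_of_le (fun k => norm_nonneg _) (fun k => ?_) (hgeo.mul_right M)
    rw [norm_mul, norm_pow, Real.norm_eq_abs, Real.norm_eq_abs]
    exact mul_le_mul_of_nonneg_left (hgM k) (pow_nonneg (abs_nonneg s) k)
  have hconvnorm := summable_norm_sum_mul_range_of_summable_norm hunorm hvnorm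
  have hconv : Summable fun n : ℕ =>
      ∑ j ∈ Finset.range (n + 1), (s ^ j * p j) * (s ^ (n - j) * b (n - j)) :=
    hconvnorm.of_norm
  have hmul : (∑' j : ℕ, s ^ j * p j) * (∑' k : ℕ, s ^ k * b k)
      = ∑' n : ℕ, ∑ j ∈ Finset.range (n + 1), (s ^ j * p j) * (s ^ (n - j) * b (n - j)) :=
    tsum_mul_tsum_eq_tsum_sum_range_of_summable_norm hunorm hvnorm
  have coeff : ∀ k : ℕ, s ^ k * ∫ ω, f (x + S k ω) ∂P
      = s ^ k * g k + ∑ j ∈ Finset.range (k + 1), (s ^ j * p j) * (s ^ (k - j) * b (k - j)) := by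
    intro k
    rw [stepD k, mul_add, Finset.mul_sum]
    congr 1
    refine Finset.sum_congr rfl fun j hj => ?_
    have hjk : j ≤ k := Finset.mem_range_succ_iff.mp hj
    have e : s ^ k = s ^ j * s ^ (k - j) := by rw [← pow_add, Nat.add_sub_cancel' hjk]
    rw [e]; ring
  have lhs_eq : (∑' k : ℕ, s ^ k * ∫ ω, f (x + S k ω) ∂P)
      = (∑' k : ℕ, s ^ k * g k) + (∑' j : ℕ, s ^ j * p j) * (∑' k : ℕ, s ^ k * b k) := by
    calc (∑' k : ℕ, s ^ k * ∫ ω, f (x + S k ω) ∂P)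
        = ∑' k : ℕ, (s ^ k * g k
            + ∑ j ∈ Finset.range (k + 1), (s ^ j * p j) * (s ^ (k - j) * b (k - j))) :=
          tsum_congr coeff
      _ = (∑' k : ℕ, s ^ k * g k)
            + ∑' k : ℕ, ∑ j ∈ Finset.range (k + 1), (s ^ j * p j) * (s ^ (k - j) * b (k - j)) :=
          Summable.tsum_add hwnorm.of_norm hconv
      _ = (∑' k : ℕ, s ^ k * g k) + (∑' j : ℕ, s ^ j * p j) * (∑' k : ℕ, s ^ k * b k) := by
          rw [hmul]
  -- first integral on the RHS
  have eF : ∀ k : ℕ, (fun ω => if (k : ℕ∞) < hitTime S x ω then s ^ k * f (x + S k ω) else 0)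
      = fun ω => s ^ k * (if (k : ℕ∞) < hitTime S x ω then f (x + S k ω) else 0) := by
    intro k
    funext ω
    by_cases h : (k : ℕ∞) < hitTime S x ω <;> simp [h]
  have intF : ∀ k : ℕ, Integrable
      (fun ω => if (k : ℕ∞) < hitTime S x ω then s ^ k * f (x + S k ω) else 0) P := fun k => by
    rw [eF k]
    exact (intG k).const_mul _
  have hFnorm : Summable fun k : ℕ =>
      ∫ ω, ‖if (k : ℕ∞) < hitTime S x ω then s ^ k * f (x + S k ω) else 0‖ ∂P := by
    refine Summable.of_nonneg_of_le (fun k => integral_nonneg fun ω => norm_nonneg _)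
      (fun k => ?_) (hgeo.mul_right M)
    calc (∫ ω, ‖if (k : ℕ∞) < hitTime S x ω then s ^ k * f (x + S k ω) else 0‖ ∂P)
        ≤ ∫ _ω, |s| ^ k * M ∂P := by
          refine integral_mono (intF k).norm (integrable_const _) fun ω => ?_
          by_cases h : (k : ℕ∞) < hitTime S x ω
          · rw [if_pos h]
            rw [Real.norm_eq_abs, abs_mul, abs_pow]
            exact mul_le_mul_of_nonneg_left (hM _) (pow_nonneg (abs_nonneg s) k)
          · rw [if_neg h]
            simp only [norm_zero]
            positivity
      _ = |s| ^ k * M := by simp [measure_univ]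
  have E1 : (∫ ω, (∑' k : ℕ,
      if (k : ℕ∞) < hitTime S x ω then s ^ k * f (x + S k ω) else 0) ∂P)
      = ∑' k : ℕ, s ^ k * g k := by
    rw [← integral_tsum_of_summable_integral_norm intF hFnorm]
    refine tsum_congr fun k => ?_
    rw [eF k, integral_const_mul]
  -- second integral on the RHS
  have intGf : ∀ j : ℕ, Integrable
      (fun ω => if hitTime S x ω = (j : ℕ∞) then s ^ j else (0 : ℝ)) P := fun j => by
    refine integrable_of_bdd (M := 1)
      (Measurable.ite (mEq j) measurable_const measurable_const) fun ω => ?_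
    by_cases h : hitTime S x ω = (j : ℕ∞)
    · rw [if_pos h, abs_pow]
      exact pow_le_one₀ (abs_nonneg s) hs.le
    · simp [h]
  have hGnorm : Summable fun j : ℕ =>
      ∫ ω, ‖if hitTime S x ω = (j : ℕ∞) then s ^ j else (0 : ℝ)‖ ∂P := by
    refine Summable.of_nonneg_of_le (fun j => integral_nonneg fun ω => norm_nonneg _)
      (fun j => ?_) hgeo
    calc (∫ ω, ‖if hitTime S x ω = (j : ℕ∞) then s ^ j else (0 : ℝ)‖ ∂P)
        ≤ ∫ _ω, |s| ^ j ∂P := by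
          refine integral_mono (intGf j).norm (integrable_const _) fun ω => ?_
          by_cases h : hitTime S x ω = (j : ℕ∞)
          · rw [if_pos h, Real.norm_eq_abs, abs_pow]
          · rw [if_neg h]
            simp only [norm_zero]
            positivity
      _ = |s| ^ j := by simp [measure_univ]
  have E2a : ∀ ω, (if hitTime S x ω = ⊤ then (0 : ℝ) else s ^ (hitTime S x ω).toNat)
      = ∑' j : ℕ, (if hitTime S x ω = (j : ℕ∞) then s ^ j else (0 : ℝ)) := by
    intro ω
    by_cases h : hitTime S x ω = ⊤
    · rw [if_pos h]
      have e : (fun j : ℕ => if hitTime S x ω = (j : ℕ∞) then s ^ j else (0 : ℝ))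
          = fun _ => 0 := funext fun j => if_neg (by simp [h])
      rw [e, tsum_zero]
    · obtain ⟨n, hn⟩ : ∃ n : ℕ, hitTime S x ω = (n : ℕ∞) :=
        ⟨(hitTime S x ω).toNat, (ENat.coe_toNat h).symm⟩
      rw [if_neg h, hn, ENat.toNat_coe,
        tsum_eq_single n (fun j hj => if_neg fun hc => hj (Nat.cast_injective hc).symm),
        if_pos rfl]
  have E2 : (∫ ω, (if hitTime S x ω = ⊤ then (0 : ℝ) else s ^ (hitTime S x ω).toNat) ∂P)
      = ∑' j : ℕ, s ^ j * p j := by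
    calc (∫ ω, (if hitTime S x ω = ⊤ then (0 : ℝ) else s ^ (hitTime S x ω).toNat) ∂P)
        = ∫ ω, (∑' j : ℕ, (if hitTime S x ω = (j : ℕ∞) then s ^ j else (0 : ℝ))) ∂P :=
          integral_congr_ae (ae_of_all _ E2a)
      _ = ∑' j : ℕ, ∫ ω, (if hitTime S x ω = (j : ℕ∞) then s ^ j else (0 : ℝ)) ∂P :=
          (integral_tsum_of_summable_integral_norm intGf hGnorm).symm
      _ = ∑' j : ℕ, s ^ j * p j := by
          refine tsum_congr fun j => ?_
          have e : (fun ω => if hitTime S x ω = (j : ℕ∞) then s ^ j else (0 : ℝ))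
              = fun ω => s ^ j * ({ω | hitTime S x ω = (j : ℕ∞)}.indicator (1 : Ω → ℝ) ω) := by
            funext ω
            by_cases h : hitTime S x ω = (j : ℕ∞) <;> simp [h, Set.indicator]
          rw [e, integral_const_mul, integral_indicator_one (mEq j)]
          rfl
  rw [E1, E2]
  exact lhs_eq
end

section
/- Let α ∈ (1,2) and δ ∈ (0, min(α−1, 2−α)). Then there exists a constant C > 0 such that for every b ∈ ℝ with 0 < |b| ≤ 1, ∫_ℝ |sin(bθ)| / min(|θ|^{α+δ}, |θ|^{α−δ}) dθ ≤ C |b|^{α−1−δ}. -/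
open MeasureTheory

open Set in
/-- If `f` is integrable on `(0,∞)` then `x ↦ f |x|` is integrable on `ℝ`. -/
lemma integrable_comp_abs_of_integrableOn_Ioi {f : ℝ → ℝ}
    (hf : IntegrableOn f (Ioi 0)) : Integrable (fun x => f |x|) := by
  have hpos : IntegrableOn (fun x => f |x|) (Ioi 0) := by
    refine hf.congr_fun (fun x hx => ?_) measurableSet_Ioi
    rw [abs_eq_self.mpr (le_of_lt hx)]
  have hneg : IntegrableOn (fun x => f |x|) (Iic 0) := by
    rw [← Measure.map_neg_eq_self (volume : Measure ℝ)]
    have m : MeasurableEmbedding fun x : ℝ => -x := (Homeomorph.neg ℝ).measurableEmbedding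
    rw [m.integrableOn_map_iff]
    simp_rw [Function.comp_def, abs_neg, neg_preimage, neg_Iic, neg_zero]
    exact (integrableOn_Ici_iff_integrableOn_Ioi).mpr hpos
  have : IntegrableOn (fun x => f |x|) (Iic 0 ∪ Ioi 0) := hneg.union hpos
  rwa [Iic_union_Ioi, integrableOn_univ] at this

/-- Let `α ∈ (1,2)` and `δ ∈ (0, min(α-1, 2-α))`. Then there is `C > 0`
such that for every `b` with `0 < |b| ≤ 1`,
`∫_ℝ |sin(bθ)| / min(|θ|^{α+δ}, |θ|^{α-δ}) dθ ≤ C |b|^{α-1-δ}`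
(the integrand being integrable). -/
theorem statement10
    (α δ : ℝ) (hα : α ∈ Set.Ioo (1 : ℝ) 2) (hδ₀ : 0 < δ) (hδ : δ < min (α - 1) (2 - α)) :
    ∃ C : ℝ, 0 < C ∧ ∀ b : ℝ, 0 < |b| → |b| ≤ 1 →
      Integrable (fun θ : ℝ =>
        |Real.sin (b * θ)| / min (|θ| ^ (α + δ)) (|θ| ^ (α - δ))) volume ∧
      (∫ θ : ℝ, |Real.sin (b * θ)| / min (|θ| ^ (α + δ)) (|θ| ^ (α - δ))) ≤
        C * |b| ^ (α - 1 - δ) := by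
  obtain ⟨hα1, hα2⟩ := hα
  have hδ1 : δ < α - 1 := lt_of_lt_of_le hδ (min_le_left _ _)
  have hδ2 : δ < 2 - α := lt_of_lt_of_le hδ (min_le_right _ _)
  have hp : (-1 : ℝ) < 1 - α - δ := by linarith
  have hq : (-1 : ℝ) < 1 + δ - α := by linarith
  have hs : δ - α < -1 := by linarith
  have hc1 : (0:ℝ) < 2 - α - δ := by linarith
  have hc2 : (0:ℝ) < 2 + δ - α := by linarith
  have hc3 : (0:ℝ) < α - 1 - δ := by linarith
  refine ⟨2 * ((2 - α - δ)⁻¹ + (2 + δ - α)⁻¹ + (α - 1 - δ)⁻¹), by positivity, ?_⟩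
  intro b hb hb1
  set r := |b| with hr_def
  set R := r⁻¹ with hR_def
  have hR1 : 1 ≤ R := one_le_inv_iff₀.mpr ⟨hb, hb1⟩
  have hR0 : (0:ℝ) < R := lt_of_lt_of_le one_pos hR1
  -- the dominating function on (0,∞)
  set G : ℝ → ℝ := fun t =>
    if t ≤ 1 then r * t ^ (1 - α - δ) else if t ≤ R then r * t ^ (1 + δ - α) else t ^ (δ - α)
    with hG_def
  -- integrability of G on the three pieces
  have hi1 : IntegrableOn G (Set.Ioc 0 1) := by
    have base : IntegrableOn (fun t : ℝ => r * t ^ (1 - α - δ)) (Set.Ioc 0 1) :=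
      (intervalIntegral.intervalIntegrable_rpow' hp (a := 0) (b := 1)).1.const_mul r
    exact base.congr_fun (fun t ht => by simp [hG_def, ht.2]) measurableSet_Ioc
  have hi2 : IntegrableOn G (Set.Ioc 1 R) := by
    have base : IntegrableOn (fun t : ℝ => r * t ^ (1 + δ - α)) (Set.Ioc 1 R) :=
      (intervalIntegral.intervalIntegrable_rpow' hq (a := 1) (b := R)).1.const_mul r
    exact base.congr_fun (fun t ht => by simp [hG_def, not_le.mpr ht.1, ht.2])
      measurableSet_Ioc
  have hi3 : IntegrableOn G (Set.Ioi R) := by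
    have base : IntegrableOn (fun t : ℝ => t ^ (δ - α)) (Set.Ioi R) :=
      integrableOn_Ioi_rpow_of_lt hs hR0
    refine base.congr_fun (fun t ht => ?_) measurableSet_Ioi
    have h1t : ¬ t ≤ 1 := not_le.mpr (lt_of_le_of_lt hR1 ht)
    have hRt : ¬ t ≤ R := not_le.mpr ht
    simp [hG_def, h1t, hRt]
  have hU1 : Set.Ioc (0:ℝ) 1 ∪ Set.Ioc 1 R = Set.Ioc 0 R :=
    Set.Ioc_union_Ioc_eq_Ioc zero_le_one hR1
  have hU2 : Set.Ioc (0:ℝ) R ∪ Set.Ioi R = Set.Ioi 0 := Set.Ioc_union_Ioi_eq_Ioi hR0.le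
  have hiG : IntegrableOn G (Set.Ioi 0) := by
    rw [← hU2, ← hU1]
    exact (hi1.union hi2).union hi3
  -- the dominating function g on ℝ
  have hg : Integrable (fun x : ℝ => G |x|) := integrable_comp_abs_of_integrableOn_Ioi hiG
  -- pointwise bound
  set f : ℝ → ℝ := fun θ => |Real.sin (b * θ)| / min (|θ| ^ (α + δ)) (|θ| ^ (α - δ)) with hf_def
  have hf_nonneg : ∀ θ, 0 ≤ f θ := fun θ =>
    div_nonneg (abs_nonneg _) (le_min (Real.rpow_nonneg (abs_nonneg θ) _)
      (Real.rpow_nonneg (abs_nonneg θ) _))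
  have hfg : ∀ θ, f θ ≤ G |θ| := by
    intro θ
    rcases eq_or_ne θ 0 with h0 | h0
    · subst h0
      have : f 0 = 0 := by
        simp [hf_def, Real.zero_rpow (by linarith : α + δ ≠ 0)]
      rw [this, hG_def]
      simp only [abs_zero]
      rw [if_pos zero_le_one, Real.zero_rpow (by linarith : (1:ℝ) - α - δ ≠ 0), mul_zero]
    · have hθ0 : (0:ℝ) < |θ| := abs_pos.mpr h0
      have hsin : |Real.sin (b * θ)| ≤ r * |θ| := by
        calc |Real.sin (b * θ)| ≤ |b * θ| := Real.abs_sin_le_abs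
        _ = r * |θ| := abs_mul b θ
      by_cases hθ1 : |θ| ≤ 1
      · have hmin : min (|θ| ^ (α + δ)) (|θ| ^ (α - δ)) = |θ| ^ (α + δ) :=
          min_eq_left (Real.rpow_le_rpow_of_exponent_ge hθ0 hθ1 (by linarith))
        have hd : (0:ℝ) < |θ| ^ (α + δ) := Real.rpow_pos_of_pos hθ0 _
        rw [hf_def, hG_def]
        simp only [if_pos hθ1]
        rw [hmin]
        calc |Real.sin (b * θ)| / |θ| ^ (α + δ) ≤ (r * |θ|) / |θ| ^ (α + δ) := by
              gcongr
        _ = r * |θ| ^ (1 - α - δ) := by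
              have : |θ| ^ ((1:ℝ) - α - δ) = |θ| / |θ| ^ (α + δ) := by
                rw [show (1:ℝ) - α - δ = 1 - (α + δ) by ring, Real.rpow_sub hθ0, Real.rpow_one]
              rw [this, mul_div_assoc]
      · have h1θ : (1:ℝ) ≤ |θ| := le_of_not_ge hθ1
        have hmin : min (|θ| ^ (α + δ)) (|θ| ^ (α - δ)) = |θ| ^ (α - δ) :=
          min_eq_right (Real.rpow_le_rpow_of_exponent_le h1θ (by linarith))
        have hd : (0:ℝ) < |θ| ^ (α - δ) := Real.rpow_pos_of_pos hθ0 _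
        rw [hf_def, hG_def]
        simp only [if_neg hθ1]
        rw [hmin]
        by_cases hθ2 : |θ| ≤ R
        · simp only [if_pos hθ2]
          calc |Real.sin (b * θ)| / |θ| ^ (α - δ) ≤ (r * |θ|) / |θ| ^ (α - δ) :=
                by gcongr
          _ = r * |θ| ^ (1 + δ - α) := by
              have : |θ| ^ ((1:ℝ) + δ - α) = |θ| / |θ| ^ (α - δ) := by
                rw [show (1:ℝ) + δ - α = 1 - (α - δ) by ring, Real.rpow_sub hθ0, Real.rpow_one]
              rw [this, mul_div_assoc]
        · simp only [if_neg hθ2]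
          calc |Real.sin (b * θ)| / |θ| ^ (α - δ) ≤ 1 / |θ| ^ (α - δ) :=
                by gcongr; exact Real.abs_sin_le_one _
          _ = |θ| ^ (δ - α) := by
              rw [show δ - α = -(α - δ) by ring, Real.rpow_neg (abs_nonneg θ), one_div]
  -- measurability / integrability of f
  have hf_meas : Measurable f := by
    rw [hf_def]
    have h1 : Measurable fun θ : ℝ => |Real.sin (b * θ)| :=
      (Real.continuous_sin.comp (continuous_const.mul continuous_id)).measurable.abs
    have h2a : Measurable fun θ : ℝ => |θ| ^ (α + δ) := measurable_abs.pow_const _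
    have h2b : Measurable fun θ : ℝ => |θ| ^ (α - δ) := measurable_abs.pow_const _
    have h2 : Measurable fun θ : ℝ => min (|θ| ^ (α + δ)) (|θ| ^ (α - δ)) :=
      Measurable.min h2a h2b
    exact Measurable.div h1 h2
  have hf_int : Integrable f := by
    refine hg.mono' hf_meas.aestronglyMeasurable (Filter.Eventually.of_forall fun θ => ?_)
    rw [Real.norm_eq_abs, abs_of_nonneg (hf_nonneg θ)]
    exact hfg θ
  refine ⟨hf_int, ?_⟩
  -- compute the integral of the dominating function
  have hIG : ∫ x : ℝ, G |x| = 2 * ∫ t in Set.Ioi (0:ℝ), G t := integral_comp_abs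
  have e1 : (∫ t in Set.Ioc (0:ℝ) R, G t) =
      (∫ t in Set.Ioc (0:ℝ) 1, G t) + (∫ t in Set.Ioc (1:ℝ) R, G t) := by
    rw [← hU1, setIntegral_union (Set.Ioc_disjoint_Ioc_of_le le_rfl) measurableSet_Ioc hi1 hi2]
  have e2 : (∫ t in Set.Ioi (0:ℝ), G t) =
      (∫ t in Set.Ioc (0:ℝ) R, G t) + (∫ t in Set.Ioi R, G t) := by
    rw [← hU2, setIntegral_union Set.Ioc_disjoint_Ioi_same measurableSet_Ioi
      (hU1 ▸ hi1.union hi2) hi3]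
  have hsplit : (∫ t in Set.Ioi (0:ℝ), G t) =
      (∫ t in Set.Ioc (0:ℝ) 1, G t) + (∫ t in Set.Ioc (1:ℝ) R, G t) +
        (∫ t in Set.Ioi R, G t) := by
    rw [e2, e1]
  -- value of each piece
  have hI1 : (∫ t in Set.Ioc (0:ℝ) 1, G t) = r * ((2 - α - δ)⁻¹) := by
    have : (∫ t in Set.Ioc (0:ℝ) 1, G t) = ∫ t in Set.Ioc (0:ℝ) 1, r * t ^ (1 - α - δ) := by
      refine setIntegral_congr_fun measurableSet_Ioc (fun t ht => ?_)
      simp [hG_def, ht.2]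
    rw [this, ← intervalIntegral.integral_of_le zero_le_one,
      intervalIntegral.integral_const_mul, integral_rpow (Or.inl hp)]
    rw [Real.one_rpow, Real.zero_rpow (by linarith : (1:ℝ) - α - δ + 1 ≠ 0)]
    rw [show (1:ℝ) - α - δ + 1 = 2 - α - δ by ring]
    rw [sub_zero, one_div]
  have hI2 : (∫ t in Set.Ioc (1:ℝ) R, G t) = r * ((R ^ (2 + δ - α) - 1) / (2 + δ - α)) := by
    have : (∫ t in Set.Ioc (1:ℝ) R, G t) = ∫ t in Set.Ioc (1:ℝ) R, r * t ^ (1 + δ - α) := by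
      refine setIntegral_congr_fun measurableSet_Ioc (fun t ht => ?_)
      simp [hG_def, not_le.mpr ht.1, ht.2]
    rw [this, ← intervalIntegral.integral_of_le hR1,
      intervalIntegral.integral_const_mul, integral_rpow (Or.inl hq)]
    rw [Real.one_rpow, show (1:ℝ) + δ - α + 1 = 2 + δ - α by ring]
  have hI3 : (∫ t in Set.Ioi R, G t) = R ^ (1 + δ - α) / (α - 1 - δ) := by
    have : (∫ t in Set.Ioi R, G t) = ∫ t in Set.Ioi R, t ^ (δ - α) := by
      refine setIntegral_congr_fun measurableSet_Ioi (fun t ht => ?_)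
      have h1t : ¬ t ≤ 1 := not_le.mpr (lt_of_le_of_lt hR1 ht)
      have hRt : ¬ t ≤ R := not_le.mpr ht
      simp [hG_def, h1t, hRt]
    rw [this, integral_Ioi_rpow_of_lt hs hR0]
    rw [show δ - α + 1 = 1 + δ - α by ring]
    rw [neg_div, ← div_neg, show -(1 + δ - α) = α - 1 - δ by ring]
  -- powers of r
  have hr01 : (0:ℝ) < r := hb
  have hRpow : ∀ x : ℝ, R ^ x = r ^ (-x) := fun x => by
    rw [show R = r⁻¹ from rfl, Real.inv_rpow hr01.le, ← Real.rpow_neg hr01.le]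
  have ht0 : (0:ℝ) < r ^ (α - 1 - δ) := Real.rpow_pos_of_pos hr01 _
  have hrt : r ≤ r ^ (α - 1 - δ) := by
    nth_rewrite 1 [← Real.rpow_one r]
    exact Real.rpow_le_rpow_of_exponent_ge hr01 hb1 (by linarith)
  have hmulr : r * r ^ (α - 2 - δ) = r ^ (α - 1 - δ) := by
    nth_rewrite 1 [← Real.rpow_one r]
    rw [← Real.rpow_add hr01]
    ring_nf
  calc (∫ θ : ℝ, f θ) ≤ ∫ x : ℝ, G |x| := integral_mono hf_int hg hfg
  _ = 2 * ((∫ t in Set.Ioc (0:ℝ) 1, G t) + (∫ t in Set.Ioc (1:ℝ) R, G t) +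
        (∫ t in Set.Ioi R, G t)) := by rw [hIG, hsplit]
  _ = 2 * (r * (2 - α - δ)⁻¹ + r * ((r ^ (α - 2 - δ) - 1) / (2 + δ - α)) +
        r ^ (α - 1 - δ) / (α - 1 - δ)) := by
      rw [hI1, hI2, hI3, hRpow, hRpow, show -(2 + δ - α) = α - 2 - δ by ring,
        show -(1 + δ - α) = α - 1 - δ by ring]
  _ ≤ 2 * ((2 - α - δ)⁻¹ + (2 + δ - α)⁻¹ + (α - 1 - δ)⁻¹) * r ^ (α - 1 - δ) := by
      have h₁ : r * (2 - α - δ)⁻¹ ≤ r ^ (α - 1 - δ) * (2 - α - δ)⁻¹ := by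
        have : (0:ℝ) ≤ (2 - α - δ)⁻¹ := inv_nonneg.mpr hc1.le
        exact mul_le_mul_of_nonneg_right hrt this
      have h₂ : r * ((r ^ (α - 2 - δ) - 1) / (2 + δ - α)) ≤
          r ^ (α - 1 - δ) * (2 + δ - α)⁻¹ := by
        have key : r * (r ^ (α - 2 - δ) - 1) ≤ r ^ (α - 1 - δ) := by nlinarith [hmulr, hr01.le]
        calc r * ((r ^ (α - 2 - δ) - 1) / (2 + δ - α))
            = (r * (r ^ (α - 2 - δ) - 1)) / (2 + δ - α) := by ring
        _ ≤ r ^ (α - 1 - δ) / (2 + δ - α) := (div_le_div_iff_of_pos_right hc2).mpr key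
        _ = r ^ (α - 1 - δ) * (2 + δ - α)⁻¹ := div_eq_mul_inv _ _
      have h₃ : r ^ (α - 1 - δ) / (α - 1 - δ) = r ^ (α - 1 - δ) * (α - 1 - δ)⁻¹ :=
        div_eq_mul_inv _ _
      linarith [h₁, h₂, h₃.le, h₃.ge]
  _ = 2 * ((2 - α - δ)⁻¹ + (2 + δ - α)⁻¹ + (α - 1 - δ)⁻¹) * r ^ (α - 1 - δ) := rfl
end

section
/- Under hypotheses (H0)–(H3), lim_{v→∞} sup_{x∈ℝ} | ∫_{−πa(v)}^{πa(v)} e^{iθx} / (λ + v(1 − ψ(θ/a(v)))) dθ − ∫_ℝ e^{iθx} / (λ + |θ|^α) dθ | = 0. -/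
open MeasureTheory Filter Set

section Helpers

lemma lb_re' (lam v : ℝ) (hlam : 0 < lam) (hv : 0 ≤ v) (z : ℂ) (hz : z.re ≤ 1) :
    lam ≤ ‖(lam:ℂ) + (v:ℂ) * (1 - z)‖ := by
  have h1 : ((lam:ℂ) + (v:ℂ)*(1-z)).re = lam + v*(1 - z.re) := by
    simp [Complex.add_re, Complex.mul_re]
  calc lam ≤ ((lam:ℂ) + (v:ℂ)*(1-z)).re := by rw [h1]; nlinarith
    _ ≤ ‖(lam:ℂ) + (v:ℂ)*(1-z)‖ := Complex.re_le_norm _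

lemma lb_mod' (lam v : ℝ) (hlam : 0 < lam) (hv : 0 ≤ v) (z : ℂ) (hz : z.re ≤ 1) :
    v * ‖1 - z‖ ≤ ‖(lam:ℂ) + (v:ℂ) * (1 - z)‖ := by
  have hwre : 0 ≤ ((v:ℂ)*(1-z)).re := by
    simp [Complex.mul_re]
    nlinarith
  have key : ‖(v:ℂ)*(1-z)‖ ≤ ‖(lam:ℂ) + (v:ℂ)*(1-z)‖ := by
    rw [Complex.norm_def, Complex.norm_def]
    apply Real.sqrt_le_sqrt
    simp only [Complex.normSq_apply, Complex.add_re, Complex.add_im, Complex.ofReal_re,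
      Complex.ofReal_im, zero_add]
    nlinarith [((v:ℂ)*(1-z)).im]
  calc v * ‖1-z‖ = ‖(v:ℂ)*(1-z)‖ := by
        rw [norm_mul, Complex.norm_real, Real.norm_eq_abs, abs_of_nonneg hv]
    _ ≤ _ := key

lemma norm_exp_I_mul' (θ x : ℝ) : ‖Complex.exp (Complex.I * θ * x)‖ = 1 := by
  rw [Complex.norm_exp]
  simp [Complex.mul_re]

lemma norm_g' (lam α x θ : ℝ) (hlam : 0 < lam) :
    ‖Complex.exp (Complex.I * θ * x) / ((lam:ℂ) + ((|θ| ^ α : ℝ):ℂ))‖ = (lam + |θ| ^ α)⁻¹ := by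
  rw [norm_div, norm_exp_I_mul']
  rw [show (lam:ℂ) + ((|θ|^α:ℝ):ℂ) = (((lam + |θ|^α : ℝ)):ℂ) by push_cast; ring]
  rw [Complex.norm_real, Real.norm_eq_abs, abs_of_pos (by positivity), one_div]

lemma lb_g' (lam α θ : ℝ) (hlam : 0 < lam) :
    lam ≤ ‖(lam:ℂ) + ((|θ| ^ α : ℝ):ℂ)‖ := by
  rw [show (lam:ℂ) + ((|θ|^α:ℝ):ℂ) = (((lam + |θ|^α : ℝ)):ℂ) by push_cast; ring]
  rw [Complex.norm_real, Real.norm_eq_abs, abs_of_pos (by positivity)]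
  have : (0:ℝ) ≤ |θ| ^ α := Real.rpow_nonneg (abs_nonneg θ) α
  linarith

lemma g_cont' (lam α x : ℝ) (hlam : 0 < lam) (hα : 0 < α) :
    Continuous (fun θ : ℝ => Complex.exp (Complex.I * θ * x) / ((lam:ℂ) + ((|θ| ^ α : ℝ):ℂ))) := by
  apply Continuous.div
  · exact Complex.continuous_exp.comp (by continuity)
  · exact Continuous.add continuous_const
      (Complex.continuous_ofReal.comp (continuous_abs.rpow_const fun _ => Or.inr hα.le))
  · intro θ h
    have h2 := lb_g' lam α θ hlam
    rw [h, norm_zero] at h2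
    linarith

lemma intOn_Ioi' (A p : ℝ) (hA : 0 < A) (hp : p < -1) :
    IntegrableOn (fun θ : ℝ => |θ| ^ p) (Ioi A) :=
  (integrableOn_Ioi_rpow_of_lt hp hA).congr_fun
    (fun x hx => by rw [abs_of_pos (hA.trans hx)]) measurableSet_Ioi

lemma intVal_Ioi' (A p : ℝ) (hA : 0 < A) (hp : p < -1) :
    ∫ θ in Ioi A, |θ| ^ p = -A ^ (p+1) / (p+1) := by
  rw [← integral_Ioi_rpow_of_lt hp hA]
  exact setIntegral_congr_fun measurableSet_Ioi (fun x hx => by rw [abs_of_pos (hA.trans hx)])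

lemma intOn_Iic' (A p : ℝ) (hA : 0 < A) (hp : p < -1) :
    IntegrableOn (fun θ : ℝ => |θ| ^ p) (Iic (-A)) := by
  rw [show (volume : Measure ℝ) = Measure.map (fun x : ℝ => -x) volume from
    (Measure.map_neg_eq_self _).symm]
  have m : MeasurableEmbedding fun x : ℝ => -x := (Homeomorph.neg ℝ).measurableEmbedding
  rw [m.integrableOn_map_iff]
  simp_rw [Function.comp_def, abs_neg, neg_preimage, neg_Iic, neg_neg]
  rw [integrableOn_Ici_iff_integrableOn_Ioi]
  exact intOn_Ioi' A p hA hp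

lemma intVal_Iic' (A p : ℝ) (hA : 0 < A) (hp : p < -1) :
    ∫ θ in Iic (-A), |θ| ^ p = -A ^ (p+1) / (p+1) := by
  have h := integral_comp_neg_Iic (-A) (fun θ : ℝ => |θ| ^ p)
  simp only [abs_neg, neg_neg] at h
  rw [h]
  exact intVal_Ioi' A p hA hp

lemma g_norm_le_tail' (lam α x θ : ℝ) (hlam : 0 < lam) (hθ : θ ≠ 0) :
    ‖Complex.exp (Complex.I * θ * x) / ((lam:ℂ) + ((|θ| ^ α : ℝ):ℂ))‖ ≤ |θ| ^ (-α) := by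
  rw [norm_g' lam α x θ hlam, Real.rpow_neg (abs_nonneg θ)]
  have h1 : (0:ℝ) < |θ| ^ α := Real.rpow_pos_of_pos (abs_pos.mpr hθ) α
  apply inv_anti₀ h1
  linarith

lemma g_integrable' (lam α x : ℝ) (hlam : 0 < lam) (hα : 1 < α) :
    Integrable (fun θ : ℝ => Complex.exp (Complex.I * θ * x) / ((lam:ℂ) + ((|θ| ^ α : ℝ):ℂ))) := by
  set g := fun θ : ℝ => Complex.exp (Complex.I * θ * x) / ((lam:ℂ) + ((|θ| ^ α : ℝ):ℂ)) with hg
  have hcont : Continuous g := g_cont' lam α x hlam (by linarith)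
  have hneg : -α < -1 := by linarith
  have h1 : IntegrableOn g (Iic (-1)) := by
    apply Integrable.mono' (intOn_Iic' 1 (-α) one_pos hneg)
      hcont.aestronglyMeasurable.restrict
    filter_upwards [ae_restrict_mem measurableSet_Iic] with θ hθ
    exact g_norm_le_tail' lam α x θ hlam (by intro h; rw [h] at hθ; simp at hθ; linarith)
  have h2 : IntegrableOn g (Icc (-1) 1) := hcont.integrableOn_Icc
  have h3 : IntegrableOn g (Ioi 1) := by
    apply Integrable.mono' (intOn_Ioi' 1 (-α) one_pos hneg)
      hcont.aestronglyMeasurable.restrict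
    filter_upwards [ae_restrict_mem measurableSet_Ioi] with θ hθ
    exact g_norm_le_tail' lam α x θ hlam (by intro h; rw [h] at hθ; simp at hθ; linarith)
  rw [← integrableOn_univ, show (univ : Set ℝ) = (Iic (-1) ∪ Icc (-1) 1) ∪ Ioi 1 by
    rw [Iic_union_Icc_eq_Iic (by norm_num : (-1:ℝ) ≤ 1), Iic_union_Ioi]]
  exact (h1.union h2).union h3

end Helpers

set_option maxHeartbeats 1600000 in
/-- Let `α ∈ (1,2)`, `λ > 0`, `a : (0,∞) → (0,∞)` with `a(v) → ∞` and
`a(v)/v → 0`, and let `ψ : ℝ → ℂ` be continuous with `Re ψ ≤ 1` (H0). Assume: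
(H1) `v(1 - ψ(θ/a(v))) → |θ|^α` uniformly on compacts;
(H2) `v|1 - ψ(θ/a(v))| ≥ c min(|θ|^{α+δ}, |θ|^{α-δ})` for `|θ| ≤ ε a(v)` and `v ≥ v₀`;
(H3) `inf{|1 - ψ(θ)| : ε ≤ |θ| ≤ π} > 0`.
Then `sup_{x ∈ ℝ} |∫_{-πa(v)}^{πa(v)} e^{iθx}/(λ + v(1-ψ(θ/a(v)))) dθ
  - ∫_ℝ e^{iθx}/(λ + |θ|^α) dθ| → 0` as `v → ∞`. -/
theorem statement11
    (α lam : ℝ) (hα : α ∈ Set.Ioo (1 : ℝ) 2) (hlam : 0 < lam)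
    (a : ℝ → ℝ) (hapos : ∀ v : ℝ, 0 < v → 0 < a v)
    (hatop : Tendsto a atTop atTop)
    (haratio : Tendsto (fun v : ℝ => a v / v) atTop (nhds 0))
    (ψ : ℝ → ℂ) (hψcont : Continuous ψ) (hψre : ∀ θ : ℝ, (ψ θ).re ≤ 1)
    (H1 : ∀ A : ℝ, 0 < A → ∀ ε' : ℝ, 0 < ε' → ∃ v₁ : ℝ, ∀ v : ℝ, v₁ ≤ v → ∀ θ : ℝ, |θ| ≤ A →
      ‖(v : ℂ) * (1 - ψ (θ / a v)) - ((|θ| ^ α : ℝ) : ℂ)‖ ≤ ε')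
    (c δ ε v₀ : ℝ) (hc : 0 < c) (hδ : δ ∈ Set.Ioo (0 : ℝ) (α - 1))
    (hε : ε ∈ Set.Ioo (0 : ℝ) Real.pi) (hv₀ : 0 < v₀)
    (H2 : ∀ v : ℝ, v₀ ≤ v → ∀ θ : ℝ, |θ| ≤ ε * a v →
      c * min (|θ| ^ (α + δ)) (|θ| ^ (α - δ)) ≤ v * ‖1 - ψ (θ / a v)‖)
    (H3 : ∃ m : ℝ, 0 < m ∧ ∀ θ : ℝ, ε ≤ |θ| → |θ| ≤ Real.pi → m ≤ ‖1 - ψ θ‖) :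
    ∀ ε' : ℝ, 0 < ε' → ∃ v₁ : ℝ, ∀ v : ℝ, v₁ ≤ v → ∀ x : ℝ,
      ‖(∫ θ in (-(Real.pi * a v))..(Real.pi * a v),
          Complex.exp (Complex.I * (θ : ℂ) * (x : ℂ)) /
            ((lam : ℂ) + (v : ℂ) * (1 - ψ (θ / a v)))) -
        ∫ θ : ℝ, Complex.exp (Complex.I * (θ : ℂ) * (x : ℂ)) /
          ((lam : ℂ) + ((|θ| ^ α : ℝ) : ℂ))‖ ≤ ε' := by
  obtain ⟨hα1, hα2⟩ := hα
  obtain ⟨hδ0, hδα⟩ := hδ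
  obtain ⟨hε0, hεπ⟩ := hε
  obtain ⟨m, hm0, hm3⟩ := H3
  intro ε' hε'
  have hπ := Real.pi_pos
  -- choose A
  have hp1 : δ - α + 1 < 0 := by linarith
  have hq1 : -α + 1 < 0 := by linarith
  have t1 : Tendsto (fun A : ℝ => 2 * (c⁻¹ * (-A ^ (δ - α + 1) / (δ - α + 1)))) atTop (nhds 0) := by
    have h0 : Tendsto (fun A : ℝ => A ^ (δ - α + 1)) atTop (nhds 0) := by
      simpa using tendsto_rpow_neg_atTop (show (0:ℝ) < -(δ - α + 1) by linarith)
    have h1 := h0.mul_const (2 * (c⁻¹ * (-1 / (δ - α + 1))))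
    rw [zero_mul] at h1
    exact h1.congr (fun A => by ring)
  have t2 : Tendsto (fun A : ℝ => 2 * (-A ^ (-α + 1) / (-α + 1))) atTop (nhds 0) := by
    have h0 : Tendsto (fun A : ℝ => A ^ (-α + 1)) atTop (nhds 0) := by
      simpa using tendsto_rpow_neg_atTop (show (0:ℝ) < -(-α + 1) by linarith)
    have h1 := h0.mul_const (2 * (-1 / (-α + 1)))
    rw [zero_mul] at h1
    exact h1.congr (fun A => by ring)
  obtain ⟨A, hKc, hKq, hA1⟩ :
      ∃ A : ℝ, 2 * (c⁻¹ * (-A ^ (δ - α + 1) / (δ - α + 1))) ≤ ε' / 4 ∧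
        2 * (-A ^ (-α + 1) / (-α + 1)) ≤ ε' / 4 ∧ 1 ≤ A := by
    have := (t1.eventually_le_const (show (0:ℝ) < ε'/4 by linarith)).and
      ((t2.eventually_le_const (show (0:ℝ) < ε'/4 by linarith)).and (eventually_ge_atTop (1:ℝ)))
    obtain ⟨A, h⟩ := this.exists
    exact ⟨A, h.1, h.2.1, h.2.2⟩
  have hA0 : (0:ℝ) < A := by linarith
  set η : ℝ := ε' * lam ^ 2 / (8 * A) with hη_def
  have hη0 : 0 < η := by positivity
  obtain ⟨w₁, hw₁⟩ := H1 A hA0 η hη0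
  obtain ⟨w₂, hw₂⟩ := eventually_atTop.mp (hatop.eventually_ge_atTop (A / ε))
  obtain ⟨w₃, hw₃⟩ := eventually_atTop.mp
    (haratio.eventually_le_const (show (0:ℝ) < ε' * m / (8 * Real.pi) by positivity))
  refine ⟨max (max w₁ w₂) (max w₃ (max v₀ 1)), fun v hv x => ?_⟩
  have hvw₁ : w₁ ≤ v := le_trans (le_trans (le_max_left _ _) (le_max_left _ _)) hv
  have hvw₂ : w₂ ≤ v := le_trans (le_trans (le_max_right _ _) (le_max_left _ _)) hv
  have hvw₃ : w₃ ≤ v := le_trans (le_trans (le_max_left _ _) (le_max_right _ _)) hv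
  have hvv₀ : v₀ ≤ v := le_trans (le_trans (le_trans (le_max_left _ _) (le_max_right _ _))
    (le_max_right _ _)) hv
  have hv1 : (1:ℝ) ≤ v := le_trans (le_trans (le_trans (le_max_right _ _) (le_max_right _ _))
    (le_max_right _ _)) hv
  have hv0 : (0:ℝ) < v := by linarith
  have hav : 0 < a v := hapos v hv0
  have hAe : A ≤ ε * a v := by
    have h := hw₂ v hvw₂
    rw [div_le_iff₀ hε0] at h
    calc A ≤ a v * ε := h
      _ = ε * a v := mul_comm _ _
  have he0 : 0 < ε * a v := mul_pos hε0 hav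
  have heb : ε * a v ≤ Real.pi * a v := mul_le_mul_of_nonneg_right hεπ.le hav.le
  have hb0 : 0 < Real.pi * a v := by positivity
  -- basic facts about f
  have hdlb : ∀ θ : ℝ, lam ≤ ‖(lam:ℂ) + (v:ℂ) * (1 - ψ (θ / a v))‖ :=
    fun θ => lb_re' lam v hlam hv0.le _ (hψre _)
  have hdlb2 : ∀ θ : ℝ, v * ‖1 - ψ (θ / a v)‖ ≤ ‖(lam:ℂ) + (v:ℂ) * (1 - ψ (θ / a v))‖ :=
    fun θ => lb_mod' lam v hlam hv0.le _ (hψre _)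
  have hdne : ∀ θ : ℝ, (lam:ℂ) + (v:ℂ) * (1 - ψ (θ / a v)) ≠ 0 := by
    intro θ h
    have h2 := hdlb θ
    rw [h, norm_zero] at h2
    linarith
  set f : ℝ → ℂ := fun θ => Complex.exp (Complex.I * (θ : ℂ) * (x : ℂ)) /
      ((lam : ℂ) + (v : ℂ) * (1 - ψ (θ / a v))) with hf_def
  set g : ℝ → ℂ := fun θ => Complex.exp (Complex.I * (θ : ℂ) * (x : ℂ)) /
      ((lam : ℂ) + ((|θ| ^ α : ℝ) : ℂ)) with hg_def
  have hfnorm : ∀ θ : ℝ, ‖f θ‖ = ‖(lam:ℂ) + (v:ℂ) * (1 - ψ (θ / a v))‖⁻¹ := by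
    intro θ
    rw [hf_def]
    rw [norm_div, norm_exp_I_mul', one_div]
  have hfcont : Continuous f := by
    rw [hf_def]
    apply Continuous.div
    · exact Complex.continuous_exp.comp
        ((continuous_const.mul Complex.continuous_ofReal).mul continuous_const)
    · exact continuous_const.add (continuous_const.mul
        (continuous_const.sub (hψcont.comp (continuous_id.div_const (a v)))))
    · exact hdne
  have hgcont : Continuous g := g_cont' lam α x hlam (by linarith)
  have hgint : Integrable g := g_integrable' lam α x hlam hα1
  have hfII : ∀ u w : ℝ, IntervalIntegrable f volume u w :=
    fun u w => hfcont.intervalIntegrable u w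
  -- split the f-integral
  have hsplit : (∫ θ in (-(Real.pi * a v))..(Real.pi * a v), f θ) =
      (∫ θ in Ioc (-(Real.pi * a v)) (-(ε * a v)), f θ)
        + (∫ θ in Ioc (-(ε * a v)) (-A), f θ)
        + (∫ θ in Ioc (-A) A, f θ)
        + (∫ θ in Ioc A (ε * a v), f θ)
        + (∫ θ in Ioc (ε * a v) (Real.pi * a v), f θ) := by
    have h1 := intervalIntegral.integral_add_adjacent_intervals
      (hfII (-(Real.pi * a v)) (-(ε * a v))) (hfII (-(ε * a v)) (Real.pi * a v))
    have h2 := intervalIntegral.integral_add_adjacent_intervals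
      (hfII (-(ε * a v)) (-A)) (hfII (-A) (Real.pi * a v))
    have h3 := intervalIntegral.integral_add_adjacent_intervals
      (hfII (-A) A) (hfII A (Real.pi * a v))
    have h4 := intervalIntegral.integral_add_adjacent_intervals
      (hfII A (ε * a v)) (hfII (ε * a v) (Real.pi * a v))
    rw [← h1, ← h2, ← h3, ← h4]
    rw [intervalIntegral.integral_of_le (show -(Real.pi * a v) ≤ -(ε * a v) by linarith),
      intervalIntegral.integral_of_le (show -(ε * a v) ≤ -A by linarith),
      intervalIntegral.integral_of_le (show -A ≤ A by linarith),
      intervalIntegral.integral_of_le (show A ≤ ε * a v by linarith),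
      intervalIntegral.integral_of_le (show ε * a v ≤ Real.pi * a v by linarith)]
    ring
  -- split the g-integral
  have hgsplit : (∫ θ : ℝ, g θ) =
      (∫ θ in Iic (-A), g θ) + (∫ θ in Ioc (-A) A, g θ) + (∫ θ in Ioi A, g θ) := by
    have h1 : (∫ θ in Iic A, g θ) + (∫ θ in Ioi A, g θ) = ∫ θ : ℝ, g θ := by
      rw [← compl_Iic]
      exact integral_add_compl measurableSet_Iic hgint
    have h2 : (∫ θ in Iic (-A), g θ) + (∫ θ in Ioc (-A) A, g θ) = ∫ θ in Iic A, g θ := by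
      rw [← setIntegral_union (Iic_disjoint_Ioc le_rfl) measurableSet_Ioc
        hgint.integrableOn hgint.integrableOn, Iic_union_Ioc_eq_Iic (by linarith)]
    rw [h2, h1]
  rw [hsplit, hgsplit]
  -- pointwise bounds
  have hvm0 : 0 < v * m := mul_pos hv0 hm0
  have hptout : ∀ θ : ℝ, ε * a v ≤ |θ| → |θ| ≤ Real.pi * a v → ‖f θ‖ ≤ (v * m)⁻¹ := by
    intro θ h1 h2
    have harg1 : ε ≤ |θ / a v| := by
      rw [abs_div, abs_of_pos hav, le_div_iff₀ hav]
      exact h1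
    have harg2 : |θ / a v| ≤ Real.pi := by
      rw [abs_div, abs_of_pos hav, div_le_iff₀ hav]
      exact h2
    have hm4 := hm3 (θ / a v) harg1 harg2
    have h3 : v * m ≤ ‖(lam:ℂ) + (v:ℂ) * (1 - ψ (θ / a v))‖ :=
      le_trans (mul_le_mul_of_nonneg_left hm4 hv0.le) (hdlb2 θ)
    rw [hfnorm θ]
    exact inv_anti₀ hvm0 h3
  have hptmid : ∀ θ : ℝ, A ≤ |θ| → |θ| ≤ ε * a v → ‖f θ‖ ≤ c⁻¹ * |θ| ^ (δ - α) := by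
    intro θ h1 h2
    have h1' : 1 ≤ |θ| := le_trans hA1 h1
    have hmin : min (|θ| ^ (α + δ)) (|θ| ^ (α - δ)) = |θ| ^ (α - δ) :=
      min_eq_right (Real.rpow_le_rpow_of_exponent_le h1' (by linarith))
    have hH2 := H2 v hvv₀ θ h2
    rw [hmin] at hH2
    have h3 : c * |θ| ^ (α - δ) ≤ ‖(lam:ℂ) + (v:ℂ) * (1 - ψ (θ / a v))‖ :=
      le_trans hH2 (hdlb2 θ)
    have h4 : 0 < c * |θ| ^ (α - δ) :=
      mul_pos hc (Real.rpow_pos_of_pos (by linarith) _)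
    rw [hfnorm θ]
    calc ‖(lam:ℂ) + (v:ℂ) * (1 - ψ (θ / a v))‖⁻¹ ≤ (c * |θ| ^ (α - δ))⁻¹ := inv_anti₀ h4 h3
      _ = c⁻¹ * |θ| ^ (δ - α) := by
          rw [mul_inv, ← Real.rpow_neg (abs_nonneg θ), show -(α - δ) = δ - α by ring]
  -- outer bounds
  have hkey : (v * m)⁻¹ * (Real.pi * a v - ε * a v) ≤ ε' / 8 := by
    have h1 : a v / v ≤ ε' * m / (8 * Real.pi) := hw₃ v hvw₃
    have h2 : (v * m)⁻¹ * (Real.pi * a v - ε * a v) ≤ (v * m)⁻¹ * (Real.pi * a v) := by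
      apply mul_le_mul_of_nonneg_left (by linarith) (by positivity)
    have h3 : (v * m)⁻¹ * (Real.pi * a v) = (a v / v) * (Real.pi / m) := by
      field_simp
    have h4 : (a v / v) * (Real.pi / m) ≤ (ε' * m / (8 * Real.pi)) * (Real.pi / m) := by
      apply mul_le_mul_of_nonneg_right h1 (by positivity)
    have h5 : (ε' * m / (8 * Real.pi)) * (Real.pi / m) = ε' / 8 := by
      field_simp
    linarith [h3 ▸ h2]
  have B1 : ‖∫ θ in Ioc (-(Real.pi * a v)) (-(ε * a v)), f θ‖ ≤ ε' / 8 := by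
    have hC : ∀ θ ∈ Ioc (-(Real.pi * a v)) (-(ε * a v)), ‖f θ‖ ≤ (v * m)⁻¹ := by
      intro θ hθ
      obtain ⟨hθ1, hθ2⟩ := hθ
      exact hptout θ (le_abs.mpr (Or.inr (by linarith)))
        (abs_le.mpr ⟨by linarith, by linarith⟩)
    have hle := norm_setIntegral_le_of_norm_le_const (μ := volume)
      (measure_Ioc_lt_top) hC
    rw [measureReal_def, Real.volume_Ioc, ENNReal.toReal_ofReal (by linarith)] at hle
    calc ‖∫ θ in Ioc (-(Real.pi * a v)) (-(ε * a v)), f θ‖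
        ≤ (v * m)⁻¹ * (-(ε * a v) - -(Real.pi * a v)) := hle
      _ = (v * m)⁻¹ * (Real.pi * a v - ε * a v) := by ring_nf
      _ ≤ ε' / 8 := hkey
  have B5 : ‖∫ θ in Ioc (ε * a v) (Real.pi * a v), f θ‖ ≤ ε' / 8 := by
    have hC : ∀ θ ∈ Ioc (ε * a v) (Real.pi * a v), ‖f θ‖ ≤ (v * m)⁻¹ := by
      intro θ hθ
      obtain ⟨hθ1, hθ2⟩ := hθ
      exact hptout θ (le_abs.mpr (Or.inl (by linarith)))
        (abs_le.mpr ⟨by linarith, hθ2⟩)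
    have hle := norm_setIntegral_le_of_norm_le_const (μ := volume)
      (measure_Ioc_lt_top) hC
    rw [measureReal_def, Real.volume_Ioc, ENNReal.toReal_ofReal (by linarith)] at hle
    calc ‖∫ θ in Ioc (ε * a v) (Real.pi * a v), f θ‖
        ≤ (v * m)⁻¹ * (Real.pi * a v - ε * a v) := hle
      _ ≤ ε' / 8 := hkey
  -- middle annulus bounds
  have hbInt : IntegrableOn (fun θ : ℝ => c⁻¹ * |θ| ^ (δ - α)) (Iic (-A)) :=
    (intOn_Iic' A (δ - α) hA0 (by linarith)).const_mul _
  have hbInt2 : IntegrableOn (fun θ : ℝ => c⁻¹ * |θ| ^ (δ - α)) (Ioi A) :=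
    (intOn_Ioi' A (δ - α) hA0 (by linarith)).const_mul _
  have hbVal : ∫ θ in Iic (-A), c⁻¹ * |θ| ^ (δ - α)
      = c⁻¹ * (-A ^ (δ - α + 1) / (δ - α + 1)) := by
    rw [integral_const_mul, intVal_Iic' A (δ - α) hA0 (by linarith)]
  have hbVal2 : ∫ θ in Ioi A, c⁻¹ * |θ| ^ (δ - α)
      = c⁻¹ * (-A ^ (δ - α + 1) / (δ - α + 1)) := by
    rw [integral_const_mul, intVal_Ioi' A (δ - α) hA0 (by linarith)]
  have B2 : ‖∫ θ in Ioc (-(ε * a v)) (-A), f θ‖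
      ≤ c⁻¹ * (-A ^ (δ - α + 1) / (δ - α + 1)) := by
    have hb1 : ‖∫ θ in Ioc (-(ε * a v)) (-A), f θ‖
        ≤ ∫ θ in Ioc (-(ε * a v)) (-A), c⁻¹ * |θ| ^ (δ - α) := by
      apply norm_integral_le_of_norm_le (hbInt.mono_set Ioc_subset_Iic_self)
      filter_upwards [ae_restrict_mem measurableSet_Ioc] with θ hθ
      exact hptmid θ (le_abs.mpr (Or.inr (by linarith [hθ.2])))
        (abs_le.mpr ⟨by linarith [hθ.1], by linarith [hθ.2]⟩)
    have hb2 : (∫ θ in Ioc (-(ε * a v)) (-A), c⁻¹ * |θ| ^ (δ - α))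
        ≤ ∫ θ in Iic (-A), c⁻¹ * |θ| ^ (δ - α) := by
      apply setIntegral_mono_set hbInt
        (Eventually.of_forall fun θ => by positivity)
        (HasSubset.Subset.eventuallyLE Ioc_subset_Iic_self)
    linarith [hbVal ▸ hb2]
  have B4 : ‖∫ θ in Ioc A (ε * a v), f θ‖
      ≤ c⁻¹ * (-A ^ (δ - α + 1) / (δ - α + 1)) := by
    have hb1 : ‖∫ θ in Ioc A (ε * a v), f θ‖
        ≤ ∫ θ in Ioc A (ε * a v), c⁻¹ * |θ| ^ (δ - α) := by
      apply norm_integral_le_of_norm_le (hbInt2.mono_set Ioc_subset_Ioi_self)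
      filter_upwards [ae_restrict_mem measurableSet_Ioc] with θ hθ
      exact hptmid θ (le_abs.mpr (Or.inl (le_of_lt hθ.1)))
        (abs_le.mpr ⟨by linarith [hθ.1], hθ.2⟩)
    have hb2 : (∫ θ in Ioc A (ε * a v), c⁻¹ * |θ| ^ (δ - α))
        ≤ ∫ θ in Ioi A, c⁻¹ * |θ| ^ (δ - α) := by
      apply setIntegral_mono_set hbInt2
        (Eventually.of_forall fun θ => by positivity)
        (HasSubset.Subset.eventuallyLE Ioc_subset_Ioi_self)
    linarith [hbVal2 ▸ hb2]
  -- central bound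
  have hfI : IntegrableOn f (Ioc (-A) A) := hfcont.integrableOn_Ioc
  have hgI : IntegrableOn g (Ioc (-A) A) := hgcont.integrableOn_Ioc
  have B3 : ‖(∫ θ in Ioc (-A) A, f θ) - ∫ θ in Ioc (-A) A, g θ‖ ≤ ε' / 4 := by
    rw [← integral_sub hfI hgI]
    have hpt3 : ∀ θ ∈ Ioc (-A) A, ‖f θ - g θ‖ ≤ η / lam ^ 2 := by
      intro θ hθ
      have hθA : |θ| ≤ A := abs_le.mpr ⟨le_of_lt hθ.1, hθ.2⟩
      have hH1 := hw₁ v hvw₁ θ hθA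
      have hu : lam ≤ ‖(lam:ℂ) + (v:ℂ) * (1 - ψ (θ / a v))‖ := hdlb θ
      have hwn : lam ≤ ‖(lam:ℂ) + ((|θ| ^ α : ℝ):ℂ)‖ := lb_g' lam α θ hlam
      have hune : (lam:ℂ) + (v:ℂ) * (1 - ψ (θ / a v)) ≠ 0 := hdne θ
      have hwne : (lam:ℂ) + ((|θ| ^ α : ℝ):ℂ) ≠ 0 := by
        intro h
        rw [h, norm_zero] at hwn
        linarith
      have heq : f θ - g θ = Complex.exp (Complex.I * (θ:ℂ) * (x:ℂ)) *
          (((lam:ℂ) + (v:ℂ) * (1 - ψ (θ / a v)))⁻¹ - ((lam:ℂ) + ((|θ| ^ α : ℝ):ℂ))⁻¹) := by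
        simp only [hf_def, hg_def, div_eq_mul_inv, mul_sub]
      rw [heq, norm_mul, norm_exp_I_mul', one_mul, inv_sub_inv hune hwne, norm_div, norm_mul]
      have hnum : ‖((lam:ℂ) + ((|θ| ^ α : ℝ):ℂ)) - ((lam:ℂ) + (v:ℂ) * (1 - ψ (θ / a v)))‖
          ≤ η := by
        rw [show ((lam:ℂ) + ((|θ| ^ α : ℝ):ℂ)) - ((lam:ℂ) + (v:ℂ) * (1 - ψ (θ / a v)))
          = -((v:ℂ) * (1 - ψ (θ / a v)) - ((|θ| ^ α : ℝ):ℂ)) by ring, norm_neg]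
        exact hH1
      calc ‖((lam:ℂ) + ((|θ| ^ α : ℝ):ℂ)) - ((lam:ℂ) + (v:ℂ) * (1 - ψ (θ / a v)))‖ /
            (‖(lam:ℂ) + (v:ℂ) * (1 - ψ (θ / a v))‖ * ‖(lam:ℂ) + ((|θ| ^ α : ℝ):ℂ)‖)
          ≤ η / (lam * lam) := by
            apply div_le_div₀ hη0.le hnum (by positivity)
              (mul_le_mul hu hwn hlam.le (norm_nonneg _))
        _ = η / lam ^ 2 := by ring_nf
    have hle := norm_setIntegral_le_of_norm_le_const (μ := volume)
      (measure_Ioc_lt_top) hpt3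
    rw [measureReal_def, Real.volume_Ioc, ENNReal.toReal_ofReal (by linarith)] at hle
    have harith : η / lam ^ 2 * (A - -A) = ε' / 4 := by
      rw [hη_def]
      field_simp
      ring
    linarith
  -- tail bounds for g
  have B6 : ‖∫ θ in Iic (-A), g θ‖ ≤ -A ^ (-α + 1) / (-α + 1) := by
    have hb1 : ‖∫ θ in Iic (-A), g θ‖ ≤ ∫ θ in Iic (-A), |θ| ^ (-α) := by
      apply norm_integral_le_of_norm_le (intOn_Iic' A (-α) hA0 (by linarith))
      filter_upwards [ae_restrict_mem measurableSet_Iic] with θ hθ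
      have hθ0 : θ ≠ 0 := by
        intro h
        rw [h] at hθ
        simp only [mem_Iic] at hθ
        linarith
      rw [hg_def]
      exact g_norm_le_tail' lam α x θ hlam hθ0
    rw [intVal_Iic' A (-α) hA0 (by linarith)] at hb1
    exact hb1
  have B7 : ‖∫ θ in Ioi A, g θ‖ ≤ -A ^ (-α + 1) / (-α + 1) := by
    have hb1 : ‖∫ θ in Ioi A, g θ‖ ≤ ∫ θ in Ioi A, |θ| ^ (-α) := by
      apply norm_integral_le_of_norm_le (intOn_Ioi' A (-α) hA0 (by linarith))
      filter_upwards [ae_restrict_mem measurableSet_Ioi] with θ hθ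
      have hθ0 : θ ≠ 0 := by
        intro h
        rw [h] at hθ
        simp only [mem_Ioi] at hθ
        linarith
      rw [hg_def]
      exact g_norm_le_tail' lam α x θ hlam hθ0
    rw [intVal_Ioi' A (-α) hA0 (by linarith)] at hb1
    exact hb1
  -- assemble
  set I₁ := ∫ θ in Ioc (-(Real.pi * a v)) (-(ε * a v)), f θ
  set I₂ := ∫ θ in Ioc (-(ε * a v)) (-A), f θ
  set I₃ := ∫ θ in Ioc (-A) A, f θ
  set I₄ := ∫ θ in Ioc A (ε * a v), f θ
  set I₅ := ∫ θ in Ioc (ε * a v) (Real.pi * a v), f θ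
  set J₁ := ∫ θ in Iic (-A), g θ
  set J₂ := ∫ θ in Ioc (-A) A, g θ
  set J₃ := ∫ θ in Ioi A, g θ
  have hre : I₁ + I₂ + I₃ + I₄ + I₅ - (J₁ + J₂ + J₃)
      = I₁ + (I₂ + ((I₃ - J₂) + (I₄ + (I₅ + (-J₁ + -J₃))))) := by ring
  rw [hre]
  calc ‖I₁ + (I₂ + ((I₃ - J₂) + (I₄ + (I₅ + (-J₁ + -J₃)))))‖
      ≤ ‖I₁‖ + (‖I₂‖ + (‖I₃ - J₂‖ + (‖I₄‖ + (‖I₅‖ + (‖J₁‖ + ‖J₃‖))))) := by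
        refine (norm_add_le _ _).trans (add_le_add_right ?_ _)
        refine (norm_add_le _ _).trans (add_le_add_right ?_ _)
        refine (norm_add_le _ _).trans (add_le_add_right ?_ _)
        refine (norm_add_le _ _).trans (add_le_add_right ?_ _)
        refine (norm_add_le _ _).trans (add_le_add_right ?_ _)
        exact (norm_add_le _ _).trans (le_of_eq (by rw [norm_neg, norm_neg]))
    _ ≤ ε' := by linarith
end

section
/- For every bounded function f : G → ℝ, every x ∈ G and every real s with |s| < 1, ∑_{k≥0} s^k E_{P_x}[f(Y(k))] = E_{P_x}[∑_{k=0}^{σ−1} s^k f(Y(k))] + E_{P_x}[s^{σ} 1_{σ<∞}] · ∑_{k≥0} s^k E_{P_{x*}}[f(Y(k))], where in the first expectation on the right-hand side the sum runs over all k ∈ ℕ₀ on the event {σ = ∞}. -/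
open MeasureTheory ProbabilityTheory
open scoped ENNReal NNReal

/-- The first hitting time of `x*` by the trajectory `ω`, valued in `ℕ∞`
(`⊤` if the trajectory never visits `x*`). -/
noncomputable def chainHitTime {G : Type*} (xstar : G) (ω : ℕ → G) : ℕ∞ :=
  ⨅ (k : ℕ) (_ : ω k = xstar), (k : ℕ∞)

set_option linter.unusedSectionVars false

namespace S15

open Finset
open scoped ENNReal NNReal

section HT

variable {G : Type*}

lemma cht_le (xstar : G) (ω : ℕ → G) {i : ℕ} (h : ω i = xstar) :
    chainHitTime xstar ω ≤ (i : ℕ∞) :=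
  iInf_le_of_le i (iInf_le_of_le h le_rfl)

lemma lt_cht_iff (xstar : G) (ω : ℕ → G) (k : ℕ) :
    (k : ℕ∞) < chainHitTime xstar ω ↔ ∀ i ≤ k, ω i ≠ xstar := by
  constructor
  · intro h i hik hieq
    exact absurd ((cht_le xstar ω hieq).trans (by exact_mod_cast hik)) (not_le.mpr h)
  · intro h
    have h2 : ((k + 1 : ℕ) : ℕ∞) ≤ chainHitTime xstar ω := by
      refine le_iInf fun i => le_iInf fun hi => ?_
      have hle : k + 1 ≤ i := by
        by_contra hc
        exact h i (by omega) hi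
      exact_mod_cast hle
    exact lt_of_lt_of_le (by exact_mod_cast Nat.lt_succ_self k) h2

lemma cht_eq_coe_iff (xstar : G) (ω : ℕ → G) (j : ℕ) :
    chainHitTime xstar ω = (j : ℕ∞) ↔ (∀ i < j, ω i ≠ xstar) ∧ ω j = xstar := by
  constructor
  · intro h
    have h1 : ∀ i < j, ω i ≠ xstar := by
      intro i hij hieq
      have h2 := h ▸ cht_le xstar ω hieq
      have : j ≤ i := by exact_mod_cast h2
      omega
    refine ⟨h1, ?_⟩
    by_contra hj
    have hall : ∀ i ≤ j, ω i ≠ xstar := by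
      intro i hij
      rcases eq_or_lt_of_le hij with rfl | hlt
      · exact hj
      · exact h1 i hlt
    have hlt := (lt_cht_iff xstar ω j).mpr hall
    rw [h] at hlt
    exact lt_irrefl _ hlt
  · rintro ⟨h1, h2⟩
    refine le_antisymm (cht_le xstar ω h2) ?_
    cases j with
    | zero => exact zero_le
    | succ m =>
      have hm : ((m : ℕ) : ℕ∞) < chainHitTime xstar ω :=
        (lt_cht_iff xstar ω m).mpr fun i hi => h1 i (by omega)
      have hm2 : ((m : ℕ∞)) + 1 ≤ chainHitTime xstar ω := Order.add_one_le_of_lt hm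
      calc ((m + 1 : ℕ) : ℕ∞) = (m : ℕ∞) + 1 := by push_cast; rfl
        _ ≤ _ := hm2

lemma cht_eq_top_iff (xstar : G) (ω : ℕ → G) :
    chainHitTime xstar ω = ⊤ ↔ ∀ i, ω i ≠ xstar := by
  constructor
  · intro h i hieq
    have h2 := h ▸ cht_le xstar ω hieq
    simp at h2
  · intro h
    exact le_antisymm le_top (le_iInf fun i => le_iInf fun hi => absurd hi (h i))

end HT


section P0

variable {G : Type*}

/-- Extension of a finite path to `ℕ`. -/
def pext (n : ℕ) (v : Fin (n + 1) → G) (i : ℕ) : G :=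
  if h : i < n + 1 then v ⟨i, h⟩ else v ⟨0, Nat.succ_pos n⟩

lemma pext_le {n : ℕ} (v : Fin (n + 1) → G) {i : ℕ} (h : i ≤ n) :
    pext n v i = v ⟨i, Nat.lt_succ_of_le h⟩ := dif_pos (Nat.lt_succ_of_le h)

end P0

section FD

variable {G : Type*} [Countable G] [DecidableEq G] [MeasurableSpace G] [DiscreteMeasurableSpace G]

lemma cylSet_eq_preimage (n : ℕ) (v : Fin (n + 1) → G) :
    {ω : ℕ → G | ∀ k ≤ n, ω k = pext n v k}
      = (fun (ω : ℕ → G) (i : Fin (n + 1)) => ω i) ⁻¹' {v} := by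
  ext ω
  simp only [Set.mem_preimage, Set.mem_singleton_iff, Set.mem_setOf_eq, funext_iff]
  constructor
  · intro h i
    have h2 := h i.val (Nat.lt_succ_iff.mp i.isLt)
    rw [pext_le v (Nat.lt_succ_iff.mp i.isLt)] at h2
    simpa using h2
  · intro h k hk
    rw [pext_le v hk]
    exact h ⟨k, Nat.lt_succ_of_le hk⟩

lemma integral_findep (P : Measure (ℕ → G)) [IsProbabilityMeasure P] (n : ℕ)
    (g : (Fin (n + 1) → G) → ℝ) (M : ℝ) (hg : ∀ v, |g v| ≤ M) :
    (∫ ω, g (fun i => ω i) ∂P)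
      = ∑' v : Fin (n + 1) → G, g v * (P {ω | ∀ k ≤ n, ω k = pext n v k}).toReal := by
  set T : (ℕ → G) → (Fin (n + 1) → G) := fun ω i => ω i with hTdef
  have hTmeas : Measurable T := measurable_pi_lambda _ fun i => measurable_pi_apply _
  have hgmeas : Measurable g := Measurable.of_discrete
  haveI : IsProbabilityMeasure (P.map T) := Measure.isProbabilityMeasure_map hTmeas.aemeasurable
  have hint : Integrable g (P.map T) :=
    ⟨hgmeas.aestronglyMeasurable,
      HasFiniteIntegral.of_bounded (C := M) (ae_of_all _ fun v => by
        simpa [Real.norm_eq_abs] using hg v)⟩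
  rw [← integral_map hTmeas.aemeasurable hgmeas.aestronglyMeasurable,
    integral_countable' hint]
  refine tsum_congr fun v => ?_
  rw [measureReal_def, Measure.map_apply hTmeas (measurableSet_singleton v), ← cylSet_eq_preimage n v,
    smul_eq_mul, mul_comm]

lemma cyl_mass (P : Measure (ℕ → G)) [IsProbabilityMeasure P] (n : ℕ) :
    Summable (fun v : Fin (n + 1) → G => (P {ω | ∀ k ≤ n, ω k = pext n v k}).toReal) ∧
    ∑' v : Fin (n + 1) → G, (P {ω | ∀ k ≤ n, ω k = pext n v k}).toReal ≤ 1 := by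
  set T : (ℕ → G) → (Fin (n + 1) → G) := fun ω i => ω i with hTdef
  have hTmeas : Measurable T := measurable_pi_lambda _ fun i => measurable_pi_apply _
  haveI : IsProbabilityMeasure (P.map T) := Measure.isProbabilityMeasure_map hTmeas.aemeasurable
  have h1 : ∑' v : Fin (n + 1) → G, (P.map T) {v} ≤ 1 := by
    have h2 := tsum_measure_le_measure_univ (μ := P.map T)
      (s := fun v : Fin (n + 1) → G => {v})
      (fun v => (measurableSet_singleton v).nullMeasurableSet)
      (fun v w hvw => (Set.disjoint_singleton.mpr hvw).aedisjoint)
    simpa using h2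
  have heq : ∀ v : Fin (n + 1) → G,
      (P.map T) {v} = P {ω | ∀ k ≤ n, ω k = pext n v k} := fun v => by
    rw [Measure.map_apply hTmeas (measurableSet_singleton v), ← cylSet_eq_preimage n v]
  have h1' : ∑' v : Fin (n + 1) → G, P {ω | ∀ k ≤ n, ω k = pext n v k} ≤ 1 := by
    simpa [heq] using h1
  have hnet : ∑' v : Fin (n + 1) → G, P {ω | ∀ k ≤ n, ω k = pext n v k} ≠ ⊤ :=
    ne_top_of_le_ne_top ENNReal.one_ne_top h1'
  constructor
  · exact ENNReal.summable_toReal hnet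
  · rw [← ENNReal.tsum_toReal_eq (fun v => measure_ne_top P _)]
    calc (∑' v : Fin (n + 1) → G, P {ω | ∀ k ≤ n, ω k = pext n v k}).toReal
        ≤ (1 : ℝ≥0∞).toReal := ENNReal.toReal_mono ENNReal.one_ne_top h1'
      _ = 1 := by simp

end FD


section W

variable {G : Type*} [Countable G] [DecidableEq G] [MeasurableSpace G] [DiscreteMeasurableSpace G]
variable (κ : Kernel G G) (P : G → Measure (ℕ → G))
variable (hcyl : ∀ x : G, ∀ n : ℕ, ∀ y : ℕ → G,
      P x {ω | ∀ k ≤ n, ω k = y k} =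
        (if y 0 = x then 1 else 0) * ∏ k ∈ Finset.range n, κ (y k) {y (k + 1)})

/-- Real-valued weight of a finite path. -/
noncomputable def wgt (x : G) (n : ℕ) (v : Fin (n + 1) → G) : ℝ :=
  (if pext n v 0 = x then (1 : ℝ) else 0) *
    ∏ i ∈ Finset.range n, (κ (pext n v i) {pext n v (i + 1)}).toReal

lemma wgt_nonneg (x : G) (n : ℕ) (v : Fin (n + 1) → G) : 0 ≤ wgt κ x n v := by
  apply mul_nonneg
  · split_ifs <;> norm_num
  · exact Finset.prod_nonneg fun i _ => ENNReal.toReal_nonneg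

lemma wgt_start_ne {x : G} {n : ℕ} {v : Fin (n + 1) → G} (h : pext n v 0 ≠ x) :
    wgt κ x n v = 0 := by rw [wgt, if_neg h, zero_mul]

include hcyl

lemma wgt_eq_cyl (x : G) (n : ℕ) (v : Fin (n + 1) → G) :
    wgt κ x n v = (P x {ω | ∀ k ≤ n, ω k = pext n v k}).toReal := by
  rw [hcyl x n (pext n v), ENNReal.toReal_mul, ENNReal.toReal_prod, wgt]
  congr 1
  split_ifs <;> simp

lemma wgt_summable (hP : ∀ x, IsProbabilityMeasure (P x)) (x : G) (n : ℕ) :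
    Summable (fun v : Fin (n + 1) → G => wgt κ x n v) ∧
      ∑' v : Fin (n + 1) → G, wgt κ x n v ≤ 1 := by
  haveI := hP x
  have h := cyl_mass (P x) n
  have he : (fun v : Fin (n + 1) → G => wgt κ x n v)
      = fun v => (P x {ω | ∀ k ≤ n, ω k = pext n v k}).toReal :=
    funext fun v => wgt_eq_cyl κ P hcyl x n v
  refine ⟨he ▸ h.1, ?_⟩
  rw [he]
  exact h.2

lemma summable_of_wgt_bound (hP : ∀ x, IsProbabilityMeasure (P x)) {x : G} {n : ℕ} {C : ℝ}
    (F : (Fin (n + 1) → G) → ℝ) (hF : ∀ v, |F v| ≤ C * wgt κ x n v) : Summable F :=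
  Summable.of_norm_bounded (((wgt_summable κ P hcyl hP x n).1).mul_left C)
    (fun v => by rw [Real.norm_eq_abs]; exact hF v)

lemma aform (hP : ∀ x, IsProbabilityMeasure (P x)) (f : G → ℝ) (M : ℝ)
    (hf : ∀ y, |f y| ≤ M) (z : G) (k : ℕ) :
    ∫ ω, f (ω k) ∂(P z) = ∑' v : Fin (k + 1) → G, f (pext k v k) * wgt κ z k v := by
  haveI := hP z
  have h1 : (fun ω : ℕ → G => f (ω k))
      = (fun ω => (fun v : Fin (k + 1) → G => f (pext k v k)) (fun i => ω i)) := by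
    funext ω
    simp [pext_le _ (le_refl k)]
  rw [h1, integral_findep (P z) k (fun v : Fin (k + 1) → G => f (pext k v k)) M (fun v => hf _)]
  exact tsum_congr fun v => by rw [wgt_eq_cyl κ P hcyl z k v]

lemma uform (hP : ∀ x, IsProbabilityMeasure (P x)) (f : G → ℝ) (M : ℝ)
    (hf : ∀ y, |f y| ≤ M) (xstar z : G) (k : ℕ) :
    ∫ ω, (if ∀ i ≤ k, ω i ≠ xstar then f (ω k) else 0) ∂(P z)
      = ∑' v : Fin (k + 1) → G,
          (if ∀ i ≤ k, pext k v i ≠ xstar then (1 : ℝ) else 0) *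
            (f (pext k v k) * wgt κ z k v) := by
  haveI := hP z
  set g : (Fin (k + 1) → G) → ℝ :=
    fun v => (if ∀ i ≤ k, pext k v i ≠ xstar then (1 : ℝ) else 0) * f (pext k v k) with hg
  have hM0 : 0 ≤ M := (abs_nonneg (f z)).trans (hf z)
  have hgb : ∀ v, |g v| ≤ M := fun v => by
    rw [hg]; dsimp only; split_ifs
    · rw [one_mul]; exact hf _
    · simpa using hM0
  have h1 : (fun ω : ℕ → G => if ∀ i ≤ k, ω i ≠ xstar then f (ω k) else 0)
      = fun ω => g (fun i => ω i) := by
    funext ω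
    have hpe : ∀ i ≤ k, pext k (fun i : Fin (k + 1) => ω i) i = ω i := fun i hi => by
      rw [pext_le _ hi]
    by_cases h : ∀ i ≤ k, ω i ≠ xstar
    · rw [if_pos h, hg]; dsimp only
      rw [if_pos fun i hi => by rw [hpe i hi]; exact h i hi, one_mul, hpe k le_rfl]
    · rw [if_neg h, hg]; dsimp only
      rw [if_neg fun hc => h fun i hi => by rw [← hpe i hi]; exact hc i hi, zero_mul]
  rw [h1, integral_findep (P z) k g M hgb]
  refine tsum_congr fun v => ?_
  rw [← wgt_eq_cyl κ P hcyl z k v]; simp only [hg]; ring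

lemma rform (hP : ∀ x, IsProbabilityMeasure (P x)) (xstar z : G) (j : ℕ) :
    (P z {ω | (∀ i < j, ω i ≠ xstar) ∧ ω j = xstar}).toReal
      = ∑' u : Fin (j + 1) → G,
          (if (∀ i < j, pext j u i ≠ xstar) ∧ pext j u j = xstar then (1 : ℝ) else 0) *
            wgt κ z j u := by
  haveI := hP z
  have hEmeas : MeasurableSet {ω : ℕ → G | (∀ i < j, ω i ≠ xstar) ∧ ω j = xstar} := by
    have h1 : {ω : ℕ → G | (∀ i < j, ω i ≠ xstar) ∧ ω j = xstar}
        = (⋂ i, ⋂ (_ : i < j), ((fun ω : ℕ → G => ω i) ⁻¹' {xstar})ᶜ)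
            ∩ ((fun ω : ℕ → G => ω j) ⁻¹' {xstar}) := by
      ext ω
      simp only [Set.mem_inter_iff, Set.mem_iInter, Set.mem_compl_iff, Set.mem_setOf_eq,
        Set.mem_preimage, Set.mem_singleton_iff]
    rw [h1]
    exact MeasurableSet.inter
      (MeasurableSet.iInter fun i => MeasurableSet.iInter fun _ =>
        ((measurable_pi_apply i) (measurableSet_singleton xstar)).compl)
      ((measurable_pi_apply j) (measurableSet_singleton xstar))
  have h2 : (P z {ω : ℕ → G | (∀ i < j, ω i ≠ xstar) ∧ ω j = xstar}).toReal
      = ∫ ω, (if (∀ i < j, ω i ≠ xstar) ∧ ω j = xstar then (1 : ℝ) else 0) ∂(P z) := by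
    have h3 : (fun ω : ℕ → G => if (∀ i < j, ω i ≠ xstar) ∧ ω j = xstar then (1 : ℝ) else 0)
        = Set.indicator {ω : ℕ → G | (∀ i < j, ω i ≠ xstar) ∧ ω j = xstar} (fun _ => (1 : ℝ)) := by
      funext ω
      by_cases h : (∀ i < j, ω i ≠ xstar) ∧ ω j = xstar
      · rw [if_pos h]
        exact (Set.indicator_of_mem
          (show ω ∈ {ω : ℕ → G | (∀ i < j, ω i ≠ xstar) ∧ ω j = xstar} from h) (fun _ => (1 : ℝ))).symm
      · rw [if_neg h]
        exact (Set.indicator_of_notMem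
          (show ω ∉ {ω : ℕ → G | (∀ i < j, ω i ≠ xstar) ∧ ω j = xstar} from h) (fun _ => (1 : ℝ))).symm
    rw [h3, integral_indicator_const (1 : ℝ) hEmeas, smul_eq_mul, mul_one, measureReal_def]
  rw [h2]
  set g : (Fin (j + 1) → G) → ℝ :=
    fun u => if (∀ i < j, pext j u i ≠ xstar) ∧ pext j u j = xstar then (1 : ℝ) else 0 with hg
  have hgb : ∀ u, |g u| ≤ 1 := fun u => by rw [hg]; dsimp only; split_ifs <;> norm_num
  have h1 : (fun ω : ℕ → G => if (∀ i < j, ω i ≠ xstar) ∧ ω j = xstar then (1 : ℝ) else 0)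
      = fun ω => g (fun i => ω i) := by
    funext ω
    have hpe : ∀ i ≤ j, pext j (fun i : Fin (j + 1) => ω i) i = ω i := fun i hi => by
      rw [pext_le _ hi]
    by_cases h : (∀ i < j, ω i ≠ xstar) ∧ ω j = xstar
    · rw [if_pos h, hg]; dsimp only
      rw [if_pos ⟨fun i hi => by rw [hpe i (le_of_lt hi)]; exact h.1 i hi,
        by rw [hpe j le_rfl]; exact h.2⟩]
    · rw [if_neg h, hg]; dsimp only
      rw [if_neg fun hc => h ⟨fun i hi => by rw [← hpe i (le_of_lt hi)]; exact hc.1 i hi,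
        by rw [← hpe j le_rfl]; exact hc.2⟩]
  rw [h1, integral_findep (P z) j g 1 hgb]
  refine tsum_congr fun u => ?_
  rw [← wgt_eq_cyl κ P hcyl z j u]

end W


section Glue

variable {G : Type*}

def glueEquiv (j m : ℕ) : ((Fin (j + 1) → G) × (Fin m → G)) ≃ (Fin (j + m + 1) → G) where
  toFun p i := if h : (i : ℕ) ≤ j then p.1 ⟨i, by omega⟩
    else p.2 ⟨(i : ℕ) - (j + 1), by have := i.isLt; omega⟩
  invFun v := (fun i => v ⟨i, by have := i.isLt; omega⟩,
    fun i => v ⟨j + 1 + i, by have := i.isLt; omega⟩)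
  left_inv p := by
    obtain ⟨u, w⟩ := p
    refine Prod.ext (funext fun i => ?_) (funext fun i => ?_)
    · have hi := i.isLt
      dsimp only
      split_ifs with h
      · exact congrArg u (Fin.ext rfl)
      · exact absurd (show (i : ℕ) ≤ j by omega) h
    · have hi := i.isLt
      dsimp only
      split_ifs with h
      · exact absurd (show j + 1 + (i : ℕ) ≤ j from h) (by omega)
      · exact congrArg w (Fin.ext (show j + 1 + (i : ℕ) - (j + 1) = (i : ℕ) by omega))
  right_inv v := by
    funext i
    have hi := i.isLt
    dsimp only
    split_ifs with h
    · exact congrArg v (Fin.ext rfl)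
    · exact congrArg v (Fin.ext (show j + 1 + ((i : ℕ) - (j + 1)) = (i : ℕ) by omega))

def headEquiv (m : ℕ) : (G × (Fin m → G)) ≃ (Fin (m + 1) → G) where
  toFun p i := if h : (i : ℕ) = 0 then p.1 else p.2 ⟨(i : ℕ) - 1, by have := i.isLt; omega⟩
  invFun v := (v 0, fun i => v ⟨(i : ℕ) + 1, by have := i.isLt; omega⟩)
  left_inv p := by
    obtain ⟨z, w⟩ := p
    refine Prod.ext ?_ (funext fun i => ?_)
    · dsimp only
      simp
    · have hi := i.isLt
      dsimp only
      rw [dif_neg (show ¬((i : ℕ) + 1 = 0) by omega)]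
      exact congrArg w (Fin.ext (show (i : ℕ) + 1 - 1 = (i : ℕ) by omega))
  right_inv v := by
    funext i
    have hi := i.isLt
    by_cases h : (i : ℕ) = 0
    · dsimp only
      rw [dif_pos h]
      exact congrArg v (Fin.ext (by simp [h]))
    · dsimp only
      rw [dif_neg h]
      exact congrArg v (Fin.ext (show (i : ℕ) - 1 + 1 = (i : ℕ) by omega))

lemma pext_glue_le {j m : ℕ} (u : Fin (j + 1) → G) (w : Fin m → G) {i : ℕ} (hi : i ≤ j) :
    pext (j + m) (glueEquiv j m (u, w)) i = pext j u i := by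
  rw [pext_le _ (show i ≤ j + m by omega), pext_le u hi]
  simp only [glueEquiv, Equiv.coe_fn_mk]
  split_ifs with h
  · rfl

lemma pext_glue_ge {j m : ℕ} (u : Fin (j + 1) → G) (w : Fin m → G) {i : ℕ}
    (h1 : 1 ≤ i) (h2 : i ≤ m) :
    pext (j + m) (glueEquiv j m (u, w)) (j + i) = w ⟨i - 1, by omega⟩ := by
  rw [pext_le _ (show j + i ≤ j + m by omega)]
  simp only [glueEquiv, Equiv.coe_fn_mk]
  split_ifs with h
  · exact absurd (show j + i ≤ j from h) (by omega)
  · exact congrArg w (Fin.ext (show j + i - (j + 1) = i - 1 by omega))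

lemma pext_head_zero {m : ℕ} (z : G) (w : Fin m → G) :
    pext m (headEquiv m (z, w)) 0 = z := by
  rw [pext_le _ (Nat.zero_le m)]
  simp only [headEquiv, Equiv.coe_fn_mk]
  split_ifs with h
  · rfl
  · exact absurd trivial h

lemma pext_head_ge {m : ℕ} (z : G) (w : Fin m → G) {i : ℕ} (h1 : 1 ≤ i) (h2 : i ≤ m) :
    pext m (headEquiv m (z, w)) i = w ⟨i - 1, by omega⟩ := by
  rw [pext_le _ h2]
  simp only [headEquiv, Equiv.coe_fn_mk]
  split_ifs with h
  · exact absurd (show (i : ℕ) = 0 from h) (by omega)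
  · rfl

end Glue


section SL

variable {G : Type*} [Countable G] [DecidableEq G] [MeasurableSpace G] [DiscreteMeasurableSpace G]
variable (κ : Kernel G G) (P : G → Measure (ℕ → G))
variable (hcyl : ∀ x : G, ∀ n : ℕ, ∀ y : ℕ → G,
      P x {ω | ∀ k ≤ n, ω k = y k} =
        (if y 0 = x then 1 else 0) * ∏ k ∈ Finset.range n, κ (y k) {y (k + 1)})

include hcyl

lemma head_reduce (hP : ∀ x, IsProbabilityMeasure (P x)) (f : G → ℝ) (M : ℝ)
    (hf : ∀ y, |f y| ≤ M) (xstar : G) (m : ℕ) :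
    ∑' w : Fin (m + 1) → G, f (pext m w m) * wgt κ xstar m w
      = ∑' w : Fin m → G,
          f (pext m (headEquiv m (xstar, w)) m) * wgt κ xstar m (headEquiv m (xstar, w)) := by
  have hFb : ∀ v : Fin (m + 1) → G, |f (pext m v m) * wgt κ xstar m v| ≤ M * wgt κ xstar m v :=
    fun v => by
      rw [abs_mul, abs_of_nonneg (wgt_nonneg κ xstar m v)]
      exact mul_le_mul_of_nonneg_right (hf _) (wgt_nonneg κ xstar m v)
  have hFsum : Summable (fun v : Fin (m + 1) → G => f (pext m v m) * wgt κ xstar m v) :=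
    summable_of_wgt_bound κ P hcyl hP _ hFb
  have hzero : ∀ z, z ≠ xstar → ∀ w : Fin m → G,
      f (pext m (headEquiv m (z, w)) m) * wgt κ xstar m (headEquiv m (z, w)) = 0 := by
    intro z hz w
    rw [wgt_start_ne κ (by rw [pext_head_zero]; exact hz), mul_zero]
  calc ∑' w : Fin (m + 1) → G, f (pext m w m) * wgt κ xstar m w
      = ∑' p : G × (Fin m → G),
          f (pext m (headEquiv m p) m) * wgt κ xstar m (headEquiv m p) :=
        (Equiv.tsum_eq (headEquiv m) _).symm
    _ = ∑' z : G, ∑' w : Fin m → G,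
          f (pext m (headEquiv m (z, w)) m) * wgt κ xstar m (headEquiv m (z, w)) :=
        Summable.tsum_prod' (hFsum.comp_injective (headEquiv m).injective)
          (fun z => (hFsum.comp_injective (headEquiv m).injective).comp_injective
            (Prod.mk_right_injective z))
    _ = ∑' w : Fin m → G,
          f (pext m (headEquiv m (xstar, w)) m) * wgt κ xstar m (headEquiv m (xstar, w)) := by
        refine tsum_eq_single xstar fun z hz => ?_
        rw [tsum_congr (fun w => hzero z hz w)]
        exact tsum_zero

lemma split_lemma (hP : ∀ x, IsProbabilityMeasure (P x)) (f : G → ℝ) (M : ℝ)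
    (hf : ∀ y, |f y| ≤ M) (xstar x : G) (j m : ℕ) :
    ∑' v : Fin (j + m + 1) → G,
        (if (∀ i < j, pext (j + m) v i ≠ xstar) ∧ pext (j + m) v j = xstar then (1 : ℝ) else 0) *
          (f (pext (j + m) v (j + m)) * wgt κ x (j + m) v)
      = (∑' u : Fin (j + 1) → G,
            (if (∀ i < j, pext j u i ≠ xstar) ∧ pext j u j = xstar then (1 : ℝ) else 0) *
              wgt κ x j u)
          * ∑' w : Fin (m + 1) → G, f (pext m w m) * wgt κ xstar m w := by
  have hterm : ∀ (u : Fin (j + 1) → G) (w : Fin m → G),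
      (if (∀ i < j, pext (j + m) (glueEquiv j m (u, w)) i ≠ xstar) ∧
            pext (j + m) (glueEquiv j m (u, w)) j = xstar then (1 : ℝ) else 0) *
          (f (pext (j + m) (glueEquiv j m (u, w)) (j + m)) *
            wgt κ x (j + m) (glueEquiv j m (u, w)))
        = ((if (∀ i < j, pext j u i ≠ xstar) ∧ pext j u j = xstar then (1 : ℝ) else 0) *
              wgt κ x j u)
            * (f (pext m (headEquiv m (xstar, w)) m) *
                wgt κ xstar m (headEquiv m (xstar, w))) := by
    intro u w
    have e1 : ∀ i ≤ j, pext (j + m) (glueEquiv j m (u, w)) i = pext j u i :=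
      fun i hi => pext_glue_le u w hi
    have hcond : ((∀ i < j, pext (j + m) (glueEquiv j m (u, w)) i ≠ xstar) ∧
          pext (j + m) (glueEquiv j m (u, w)) j = xstar)
        ↔ ((∀ i < j, pext j u i ≠ xstar) ∧ pext j u j = xstar) := by
      constructor
      · rintro ⟨h1, h2⟩
        exact ⟨fun i hi => by rw [← e1 i (le_of_lt hi)]; exact h1 i hi,
          by rw [← e1 j le_rfl]; exact h2⟩
      · rintro ⟨h1, h2⟩
        exact ⟨fun i hi => by rw [e1 i (le_of_lt hi)]; exact h1 i hi,
          by rw [e1 j le_rfl]; exact h2⟩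
    by_cases hσ : (∀ i < j, pext j u i ≠ xstar) ∧ pext j u j = xstar
    · rw [if_pos (hcond.mpr hσ), if_pos hσ, one_mul, one_mul]
      have hcross : ∀ i ≤ m, pext (j + m) (glueEquiv j m (u, w)) (j + i)
          = pext m (headEquiv m (xstar, w)) i := by
        intro i hi
        rcases Nat.eq_zero_or_pos i with rfl | hpos
        · simp only [Nat.add_zero]
          rw [e1 j le_rfl, hσ.2, pext_head_zero]
        · rw [pext_glue_ge u w hpos hi, pext_head_ge xstar w hpos hi]
      have hsplit : ∏ i ∈ Finset.range (j + m),
            (κ (pext (j + m) (glueEquiv j m (u, w)) i)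
              {pext (j + m) (glueEquiv j m (u, w)) (i + 1)}).toReal
          = (∏ i ∈ Finset.range j, (κ (pext j u i) {pext j u (i + 1)}).toReal)
            * ∏ i ∈ Finset.range m, (κ (pext m (headEquiv m (xstar, w)) i)
                {pext m (headEquiv m (xstar, w)) (i + 1)}).toReal := by
        rw [Finset.prod_range_add]
        congr 1
        · refine Finset.prod_congr rfl fun i hi => ?_
          rw [Finset.mem_range] at hi
          rw [e1 i (by omega), e1 (i + 1) (by omega)]
        · refine Finset.prod_congr rfl fun i hi => ?_
          rw [Finset.mem_range] at hi
          rw [hcross i (by omega), show j + i + 1 = j + (i + 1) by omega,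
            hcross (i + 1) (by omega)]
      rw [show pext (j + m) (glueEquiv j m (u, w)) (j + m) = pext m (headEquiv m (xstar, w)) m
        from hcross m le_rfl]
      simp only [wgt]
      rw [hsplit, e1 0 (Nat.zero_le j), pext_head_zero, if_pos rfl]
      ring
    · rw [if_neg (fun hc => hσ (hcond.mp hc)), if_neg hσ, zero_mul, zero_mul, zero_mul]
  have hAb : ∀ u : Fin (j + 1) → G,
      |(if (∀ i < j, pext j u i ≠ xstar) ∧ pext j u j = xstar then (1 : ℝ) else 0) *
          wgt κ x j u| ≤ 1 * wgt κ x j u := fun u => by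
    split_ifs with h
    · rw [one_mul, abs_of_nonneg (wgt_nonneg κ x j u)]
    · simpa using wgt_nonneg κ x j u
  have hAsum : Summable (fun u : Fin (j + 1) → G =>
      (if (∀ i < j, pext j u i ≠ xstar) ∧ pext j u j = xstar then (1 : ℝ) else 0) *
        wgt κ x j u) := summable_of_wgt_bound κ P hcyl hP _ hAb
  have hFb : ∀ v : Fin (m + 1) → G, |f (pext m v m) * wgt κ xstar m v| ≤ M * wgt κ xstar m v :=
    fun v => by
      rw [abs_mul, abs_of_nonneg (wgt_nonneg κ xstar m v)]
      exact mul_le_mul_of_nonneg_right (hf _) (wgt_nonneg κ xstar m v)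
  have hFsum : Summable (fun v : Fin (m + 1) → G => f (pext m v m) * wgt κ xstar m v) :=
    summable_of_wgt_bound κ P hcyl hP _ hFb
  have hBsum : Summable (fun w : Fin m → G =>
      f (pext m (headEquiv m (xstar, w)) m) * wgt κ xstar m (headEquiv m (xstar, w))) :=
    hFsum.comp_injective ((headEquiv m).injective.comp (Prod.mk_right_injective xstar))
  have hAnorm : Summable (fun u : Fin (j + 1) → G =>
      ‖(if (∀ i < j, pext j u i ≠ xstar) ∧ pext j u j = xstar then (1 : ℝ) else 0) *
        wgt κ x j u‖) := by simpa only [Real.norm_eq_abs] using hAsum.abs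
  have hBnorm : Summable (fun w : Fin m → G =>
      ‖f (pext m (headEquiv m (xstar, w)) m) * wgt κ xstar m (headEquiv m (xstar, w))‖) := by
    simpa only [Real.norm_eq_abs] using hBsum.abs
  calc ∑' v : Fin (j + m + 1) → G,
        (if (∀ i < j, pext (j + m) v i ≠ xstar) ∧ pext (j + m) v j = xstar then (1 : ℝ) else 0) *
          (f (pext (j + m) v (j + m)) * wgt κ x (j + m) v)
      = ∑' p : (Fin (j + 1) → G) × (Fin m → G),
          (if (∀ i < j, pext (j + m) (glueEquiv j m p) i ≠ xstar) ∧
              pext (j + m) (glueEquiv j m p) j = xstar then (1 : ℝ) else 0) *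
            (f (pext (j + m) (glueEquiv j m p) (j + m)) * wgt κ x (j + m) (glueEquiv j m p)) :=
        (Equiv.tsum_eq (glueEquiv j m) _).symm
    _ = ∑' p : (Fin (j + 1) → G) × (Fin m → G),
          ((if (∀ i < j, pext j p.1 i ≠ xstar) ∧ pext j p.1 j = xstar then (1 : ℝ) else 0) *
              wgt κ x j p.1)
            * (f (pext m (headEquiv m (xstar, p.2)) m) *
                wgt κ xstar m (headEquiv m (xstar, p.2))) :=
        tsum_congr fun p => hterm p.1 p.2
    _ = (∑' u : Fin (j + 1) → G,
            (if (∀ i < j, pext j u i ≠ xstar) ∧ pext j u j = xstar then (1 : ℝ) else 0) *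
              wgt κ x j u)
          * ∑' w : Fin m → G,
              f (pext m (headEquiv m (xstar, w)) m) * wgt κ xstar m (headEquiv m (xstar, w)) :=
        (tsum_mul_tsum_of_summable_norm hAnorm hBnorm).symm
    _ = (∑' u : Fin (j + 1) → G,
            (if (∀ i < j, pext j u i ≠ xstar) ∧ pext j u j = xstar then (1 : ℝ) else 0) *
              wgt κ x j u)
          * ∑' w : Fin (m + 1) → G, f (pext m w m) * wgt κ xstar m w := by
        rw [head_reduce κ P hcyl hP f M hf xstar m]

lemma key_decomp (hP : ∀ x, IsProbabilityMeasure (P x)) (f : G → ℝ) (M : ℝ)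
    (hf : ∀ y, |f y| ≤ M) (xstar x : G) (k : ℕ) :
    ∫ ω, f (ω k) ∂(P x)
      = (∫ ω, (if ∀ i ≤ k, ω i ≠ xstar then f (ω k) else 0) ∂(P x))
        + ∑ j ∈ Finset.range (k + 1),
            (P x {ω | (∀ i < j, ω i ≠ xstar) ∧ ω j = xstar}).toReal *
              ∫ ω, f (ω (k - j)) ∂(P xstar) := by
  have hM0 : 0 ≤ M := (abs_nonneg (f x)).trans (hf x)
  rw [aform κ P hcyl hP f M hf x k, uform κ P hcyl hP f M hf xstar x k]
  have hj : ∀ j ∈ Finset.range (k + 1),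
      (P x {ω | (∀ i < j, ω i ≠ xstar) ∧ ω j = xstar}).toReal * ∫ ω, f (ω (k - j)) ∂(P xstar)
        = ∑' v : Fin (k + 1) → G,
            (if (∀ i < j, pext k v i ≠ xstar) ∧ pext k v j = xstar then (1 : ℝ) else 0) *
              (f (pext k v k) * wgt κ x k v) := by
    intro j hjmem
    rw [Finset.mem_range] at hjmem
    obtain ⟨m, rfl⟩ : ∃ m, k = j + m := ⟨k - j, by omega⟩
    rw [Nat.add_sub_cancel_left, rform κ P hcyl hP xstar x j, aform κ P hcyl hP f M hf xstar m]
    exact (split_lemma κ P hcyl hP f M hf xstar x j m).symm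
  rw [Finset.sum_congr rfl hj]
  have hbd : ∀ (c : ℝ), |c| ≤ 1 → ∀ v : Fin (k + 1) → G,
      |c * (f (pext k v k) * wgt κ x k v)| ≤ M * wgt κ x k v := by
    intro c hc v
    rw [abs_mul, abs_mul, abs_of_nonneg (wgt_nonneg κ x k v)]
    calc |c| * (|f (pext k v k)| * wgt κ x k v) ≤ 1 * (M * wgt κ x k v) :=
        mul_le_mul hc (mul_le_mul_of_nonneg_right (hf _) (wgt_nonneg κ x k v))
          (mul_nonneg (abs_nonneg _) (wgt_nonneg κ x k v)) one_pos.le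
      _ = M * wgt κ x k v := one_mul _
  have sU : Summable (fun v : Fin (k + 1) → G =>
      (if ∀ i ≤ k, pext k v i ≠ xstar then (1 : ℝ) else 0) * (f (pext k v k) * wgt κ x k v)) :=
    summable_of_wgt_bound κ P hcyl hP _
      (fun v => hbd _ (by split_ifs <;> norm_num) v)
  have sσ : ∀ j, Summable (fun v : Fin (k + 1) → G =>
      (if (∀ i < j, pext k v i ≠ xstar) ∧ pext k v j = xstar then (1 : ℝ) else 0) *
        (f (pext k v k) * wgt κ x k v)) := fun j =>
    summable_of_wgt_bound κ P hcyl hP _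
      (fun v => hbd _ (by split_ifs <;> norm_num) v)
  have sS : Summable (fun v : Fin (k + 1) → G =>
      ∑ j ∈ Finset.range (k + 1),
        (if (∀ i < j, pext k v i ≠ xstar) ∧ pext k v j = xstar then (1 : ℝ) else 0) *
          (f (pext k v k) * wgt κ x k v)) := summable_sum fun j _ => sσ j
  have hpart : ∀ v : Fin (k + 1) → G,
      f (pext k v k) * wgt κ x k v
        = (if ∀ i ≤ k, pext k v i ≠ xstar then (1 : ℝ) else 0) * (f (pext k v k) * wgt κ x k v)
          + ∑ j ∈ Finset.range (k + 1),
              (if (∀ i < j, pext k v i ≠ xstar) ∧ pext k v j = xstar then (1 : ℝ) else 0) *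
                (f (pext k v k) * wgt κ x k v) := by
    intro v
    have hone : (if ∀ i ≤ k, pext k v i ≠ xstar then (1 : ℝ) else 0)
        + ∑ j ∈ Finset.range (k + 1),
            (if (∀ i < j, pext k v i ≠ xstar) ∧ pext k v j = xstar then (1 : ℝ) else 0) = 1 := by
      by_cases hU : ∀ i ≤ k, pext k v i ≠ xstar
      · rw [if_pos hU, Finset.sum_eq_zero, add_zero]
        intro j hjj
        rw [Finset.mem_range] at hjj
        exact if_neg fun hc => hU j (by omega) hc.2
      · rw [if_neg hU, zero_add]
        push_neg at hU
        obtain ⟨i0, hi0le, hi0⟩ := hU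
        have hex : ∃ n, pext k v n = xstar := ⟨i0, hi0⟩
        rw [Finset.sum_eq_single (Nat.find hex)]
        · rw [if_pos ⟨fun i hi => Nat.find_min hex hi, Nat.find_spec hex⟩]
        · intro j hjr hjne
          rw [Finset.mem_range] at hjr
          refine if_neg fun hc => ?_
          rcases lt_or_gt_of_ne hjne with hlt | hgt
          · exact Nat.find_min hex hlt hc.2
          · exact hc.1 (Nat.find hex) hgt (Nat.find_spec hex)
        · intro hnotin
          refine absurd (Finset.mem_range.mpr ?_) hnotin
          have := Nat.find_min' hex hi0
          omega
    calc f (pext k v k) * wgt κ x k v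
        = ((if ∀ i ≤ k, pext k v i ≠ xstar then (1 : ℝ) else 0)
            + ∑ j ∈ Finset.range (k + 1),
                (if (∀ i < j, pext k v i ≠ xstar) ∧ pext k v j = xstar then (1 : ℝ) else 0))
          * (f (pext k v k) * wgt κ x k v) := by rw [hone, one_mul]
      _ = _ := by rw [add_mul, Finset.sum_mul]
  calc ∑' v : Fin (k + 1) → G, f (pext k v k) * wgt κ x k v
      = ∑' v : Fin (k + 1) → G,
          ((if ∀ i ≤ k, pext k v i ≠ xstar then (1 : ℝ) else 0) * (f (pext k v k) * wgt κ x k v)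
            + ∑ j ∈ Finset.range (k + 1),
                (if (∀ i < j, pext k v i ≠ xstar) ∧ pext k v j = xstar then (1 : ℝ) else 0) *
                  (f (pext k v k) * wgt κ x k v)) := tsum_congr hpart
    _ = (∑' v : Fin (k + 1) → G,
          (if ∀ i ≤ k, pext k v i ≠ xstar then (1 : ℝ) else 0) * (f (pext k v k) * wgt κ x k v))
        + ∑' v : Fin (k + 1) → G,
            ∑ j ∈ Finset.range (k + 1),
              (if (∀ i < j, pext k v i ≠ xstar) ∧ pext k v j = xstar then (1 : ℝ) else 0) *
                (f (pext k v k) * wgt κ x k v) := Summable.tsum_add sU sS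
    _ = _ := by rw [Summable.tsum_finsetSum fun j _ => sσ j]

end SL

end S15

open S15 in
/-- Let `G` be a countable set with the discrete σ-algebra, `κ` a Markov
kernel on `G`, `x* ∈ G`, and for `x ∈ G` let `P x` be the trajectory law of the
time-homogeneous Markov chain started at `x` with transition kernel `κ` (characterized by
its cylinder probabilities). With `σ` the first hitting time of `x*`, for every bounded
`f : G → ℝ`, every `x ∈ G` and every `|s| < 1`,
`∑_{k ≥ 0} s^k E_{P_x}[f(Y k)] = E_{P_x}[∑_{k=0}^{σ-1} s^k f(Y k)]
  + E_{P_x}[s^σ 1_{σ<∞}] ∑_{k ≥ 0} s^k E_{P_{x*}}[f(Y k)]`,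
where on `{σ = ∞}` the inner sum runs over all `k ∈ ℕ`. -/
theorem statement15
    {G : Type*} [Countable G] [DecidableEq G] [MeasurableSpace G] [DiscreteMeasurableSpace G]
    (κ : ProbabilityTheory.Kernel G G) [IsMarkovKernel κ] (xstar : G)
    (P : G → Measure (ℕ → G)) (hP : ∀ x, IsProbabilityMeasure (P x))
    (hcyl : ∀ x : G, ∀ n : ℕ, ∀ y : ℕ → G,
      P x {ω | ∀ k ≤ n, ω k = y k} =
        (if y 0 = x then 1 else 0) * ∏ k ∈ Finset.range n, κ (y k) {y (k + 1)})
    (f : G → ℝ) (hf : ∃ M : ℝ, ∀ y : G, |f y| ≤ M)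
    (x : G) (s : ℝ) (hs : |s| < 1) :
    (∑' k : ℕ, s ^ k * ∫ ω, f (ω k) ∂(P x)) =
      (∫ ω, (∑' k : ℕ,
          if (k : ℕ∞) < chainHitTime xstar ω then s ^ k * f (ω k) else 0) ∂(P x)) +
        (∫ ω, (if chainHitTime xstar ω = ⊤ then (0 : ℝ)
            else s ^ (chainHitTime xstar ω).toNat) ∂(P x)) *
          ∑' k : ℕ, s ^ k * ∫ ω, f (ω k) ∂(P xstar) := by
  classical
  obtain ⟨M₀, hfM₀⟩ := hf
  set M : ℝ := max M₀ 0 with hMdef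
  have hfM : ∀ y, |f y| ≤ M := fun y => (hfM₀ y).trans (le_max_left _ _)
  have hM0 : 0 ≤ M := le_max_right _ _
  haveI := hP x
  haveI := hP xstar
  have hfmeas : Measurable f := Measurable.of_discrete
  -- measurable sets
  have hSet1 : ∀ k : ℕ, MeasurableSet {ω : ℕ → G | ∀ i ≤ k, ω i ≠ xstar} := by
    intro k
    have h1 : {ω : ℕ → G | ∀ i ≤ k, ω i ≠ xstar}
        = ⋂ i, ⋂ (_ : i ≤ k), ((fun ω : ℕ → G => ω i) ⁻¹' {xstar})ᶜ := by
      ext ω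
      simp only [Set.mem_setOf_eq, Set.mem_iInter, Set.mem_compl_iff, Set.mem_preimage,
        Set.mem_singleton_iff]
    rw [h1]
    exact MeasurableSet.iInter fun i => MeasurableSet.iInter fun _ =>
      ((measurable_pi_apply i) (measurableSet_singleton xstar)).compl
  have hSet2 : ∀ j : ℕ, MeasurableSet {ω : ℕ → G | (∀ i < j, ω i ≠ xstar) ∧ ω j = xstar} := by
    intro j
    have h1 : {ω : ℕ → G | (∀ i < j, ω i ≠ xstar) ∧ ω j = xstar}
        = (⋂ i, ⋂ (_ : i < j), ((fun ω : ℕ → G => ω i) ⁻¹' {xstar})ᶜ)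
            ∩ ((fun ω : ℕ → G => ω j) ⁻¹' {xstar}) := by
      ext ω
      simp only [Set.mem_inter_iff, Set.mem_iInter, Set.mem_compl_iff, Set.mem_setOf_eq,
        Set.mem_preimage, Set.mem_singleton_iff]
    rw [h1]
    exact MeasurableSet.inter
      (MeasurableSet.iInter fun i => MeasurableSet.iInter fun _ =>
        ((measurable_pi_apply i) (measurableSet_singleton xstar)).compl)
      ((measurable_pi_apply j) (measurableSet_singleton xstar))
  -- geometric summability
  have hgeo1 : Summable (fun k : ℕ => |s| ^ k) :=
    summable_geometric_of_lt_one (abs_nonneg s) hs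
  have hgeoM : Summable (fun k : ℕ => |s| ^ k * M) := hgeo1.mul_right M
  -- first integral
  have hmeas1 : ∀ k : ℕ, AEStronglyMeasurable
      (fun ω : ℕ → G => if (k : ℕ∞) < chainHitTime xstar ω then s ^ k * f (ω k) else 0) (P x) := by
    intro k
    have hset : MeasurableSet {ω : ℕ → G | (k : ℕ∞) < chainHitTime xstar ω} := by
      have h2 : {ω : ℕ → G | (k : ℕ∞) < chainHitTime xstar ω}
          = {ω : ℕ → G | ∀ i ≤ k, ω i ≠ xstar} := by
        ext ω
        exact lt_cht_iff xstar ω k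
      rw [h2]
      exact hSet1 k
    exact (Measurable.ite hset (measurable_const.mul (hfmeas.comp (measurable_pi_apply k)))
      measurable_const).aestronglyMeasurable
  have hlin1 : ∀ k : ℕ,
      (∫⁻ ω, ‖if (k : ℕ∞) < chainHitTime xstar ω then s ^ k * f (ω k) else 0‖₊ ∂(P x))
        ≤ ENNReal.ofReal (|s| ^ k * M) := by
    intro k
    have hpt : ∀ ω : ℕ → G,
        (‖if (k : ℕ∞) < chainHitTime xstar ω then s ^ k * f (ω k) else 0‖₊ : ℝ≥0∞)
          ≤ ENNReal.ofReal (|s| ^ k * M) := by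
      intro ω
      rw [← enorm_eq_nnnorm, ← ofReal_norm]
      apply ENNReal.ofReal_le_ofReal
      by_cases h : (k : ℕ∞) < chainHitTime xstar ω
      · rw [if_pos h, norm_mul, norm_pow, Real.norm_eq_abs, Real.norm_eq_abs]
        exact mul_le_mul_of_nonneg_left (hfM _) (by positivity)
      · rw [if_neg h, norm_zero]
        positivity
    calc (∫⁻ ω, ‖if (k : ℕ∞) < chainHitTime xstar ω then s ^ k * f (ω k) else 0‖₊ ∂(P x))
        ≤ ∫⁻ _, ENNReal.ofReal (|s| ^ k * M) ∂(P x) := lintegral_mono hpt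
      _ = ENNReal.ofReal (|s| ^ k * M) := by simp [lintegral_const, measure_univ]
  have hfin1 : (∑' k : ℕ,
      ∫⁻ ω, ‖if (k : ℕ∞) < chainHitTime xstar ω then s ^ k * f (ω k) else 0‖₊ ∂(P x)) ≠ ⊤ := by
    refine ne_top_of_le_ne_top ?_ (ENNReal.tsum_le_tsum hlin1)
    rw [← ENNReal.ofReal_tsum_of_nonneg (fun k => by positivity) hgeoM]
    exact ENNReal.ofReal_ne_top
  have hInt1 : (∫ ω, (∑' k : ℕ,
        if (k : ℕ∞) < chainHitTime xstar ω then s ^ k * f (ω k) else 0) ∂(P x))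
      = ∑' k : ℕ, s ^ k * ∫ ω, (if ∀ i ≤ k, ω i ≠ xstar then f (ω k) else 0) ∂(P x) := by
    rw [integral_tsum hmeas1 hfin1]
    refine tsum_congr fun k => ?_
    rw [← integral_const_mul]
    refine integral_congr_ae (ae_of_all _ fun ω => ?_)
    dsimp only
    by_cases h : (k : ℕ∞) < chainHitTime xstar ω
    · rw [if_pos h, if_pos ((lt_cht_iff xstar ω k).mp h)]
    · rw [if_neg h, if_neg (fun hc => h ((lt_cht_iff xstar ω k).mpr hc)), mul_zero]
  -- second integral
  have hpt2 : ∀ ω : ℕ → G,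
      (if chainHitTime xstar ω = ⊤ then (0 : ℝ) else s ^ (chainHitTime xstar ω).toNat)
        = ∑' j : ℕ, (if chainHitTime xstar ω = (j : ℕ∞) then s ^ j else 0) := by
    intro ω
    by_cases hT : chainHitTime xstar ω = ⊤
    · rw [if_pos hT]
      symm
      have hz : ∀ j : ℕ, (if chainHitTime xstar ω = (j : ℕ∞) then s ^ j else (0 : ℝ)) = 0 :=
        fun j => if_neg fun hc => WithTop.coe_ne_top (α := ℕ) (hc.symm.trans hT)
      rw [tsum_congr hz]
      exact tsum_zero
    · obtain ⟨j0, hj0⟩ := WithTop.ne_top_iff_exists.mp hT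
      have hj0' : (j0 : ℕ∞) = chainHitTime xstar ω := by exact_mod_cast hj0
      rw [if_neg hT, ← hj0', ENat.toNat_coe]
      symm
      rw [tsum_eq_single j0 (fun j hj => if_neg fun hc => hj (by exact_mod_cast hc.symm))]
      exact if_pos rfl
  have hmeas2 : ∀ j : ℕ, AEStronglyMeasurable
      (fun ω : ℕ → G => if chainHitTime xstar ω = (j : ℕ∞) then s ^ j else 0) (P x) := by
    intro j
    have hset : MeasurableSet {ω : ℕ → G | chainHitTime xstar ω = (j : ℕ∞)} := by
      have h2 : {ω : ℕ → G | chainHitTime xstar ω = (j : ℕ∞)}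
          = {ω : ℕ → G | (∀ i < j, ω i ≠ xstar) ∧ ω j = xstar} := by
        ext ω
        exact cht_eq_coe_iff xstar ω j
      rw [h2]
      exact hSet2 j
    exact (Measurable.ite hset measurable_const measurable_const).aestronglyMeasurable
  have hlin2 : ∀ j : ℕ,
      (∫⁻ ω, ‖if chainHitTime xstar ω = (j : ℕ∞) then s ^ j else 0‖₊ ∂(P x))
        ≤ ENNReal.ofReal (|s| ^ j) := by
    intro j
    have hpt : ∀ ω : ℕ → G,
        (‖if chainHitTime xstar ω = (j : ℕ∞) then s ^ j else 0‖₊ : ℝ≥0∞)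
          ≤ ENNReal.ofReal (|s| ^ j) := by
      intro ω
      rw [← enorm_eq_nnnorm, ← ofReal_norm]
      apply ENNReal.ofReal_le_ofReal
      by_cases h : chainHitTime xstar ω = (j : ℕ∞)
      · rw [if_pos h, norm_pow, Real.norm_eq_abs]
      · rw [if_neg h, norm_zero]
        positivity
    calc (∫⁻ ω, ‖if chainHitTime xstar ω = (j : ℕ∞) then s ^ j else 0‖₊ ∂(P x))
        ≤ ∫⁻ _, ENNReal.ofReal (|s| ^ j) ∂(P x) := lintegral_mono hpt
      _ = ENNReal.ofReal (|s| ^ j) := by simp [lintegral_const, measure_univ]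
  have hfin2 : (∑' j : ℕ,
      ∫⁻ ω, ‖if chainHitTime xstar ω = (j : ℕ∞) then s ^ j else 0‖₊ ∂(P x)) ≠ ⊤ := by
    refine ne_top_of_le_ne_top ?_ (ENNReal.tsum_le_tsum hlin2)
    rw [← ENNReal.ofReal_tsum_of_nonneg (fun k => by positivity) hgeo1]
    exact ENNReal.ofReal_ne_top
  have hInt2 : (∫ ω, (if chainHitTime xstar ω = ⊤ then (0 : ℝ)
        else s ^ (chainHitTime xstar ω).toNat) ∂(P x))
      = ∑' j : ℕ, s ^ j * (P x {ω | (∀ i < j, ω i ≠ xstar) ∧ ω j = xstar}).toReal := by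
    calc (∫ ω, (if chainHitTime xstar ω = ⊤ then (0 : ℝ)
          else s ^ (chainHitTime xstar ω).toNat) ∂(P x))
        = ∫ ω, (∑' j : ℕ, (if chainHitTime xstar ω = (j : ℕ∞) then s ^ j else 0)) ∂(P x) :=
          integral_congr_ae (ae_of_all _ hpt2)
      _ = ∑' j : ℕ, ∫ ω, (if chainHitTime xstar ω = (j : ℕ∞) then s ^ j else 0) ∂(P x) :=
          integral_tsum hmeas2 hfin2
      _ = ∑' j : ℕ, s ^ j * (P x {ω | (∀ i < j, ω i ≠ xstar) ∧ ω j = xstar}).toReal := by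
          refine tsum_congr fun j => ?_
          have h3 : (fun ω : ℕ → G => if chainHitTime xstar ω = (j : ℕ∞) then s ^ j else 0)
              = Set.indicator {ω : ℕ → G | (∀ i < j, ω i ≠ xstar) ∧ ω j = xstar}
                  (fun _ => s ^ j) := by
            funext ω
            by_cases h : chainHitTime xstar ω = (j : ℕ∞)
            · rw [if_pos h]
              exact (Set.indicator_of_mem
                (show ω ∈ {ω : ℕ → G | (∀ i < j, ω i ≠ xstar) ∧ ω j = xstar} from
                  (cht_eq_coe_iff xstar ω j).mp h) (fun _ => s ^ j)).symm
            · rw [if_neg h]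
              exact (Set.indicator_of_notMem
                (show ω ∉ {ω : ℕ → G | (∀ i < j, ω i ≠ xstar) ∧ ω j = xstar} from
                  fun hc => h ((cht_eq_coe_iff xstar ω j).mpr hc)) (fun _ => s ^ j)).symm
          rw [h3, integral_indicator_const _ (hSet2 j), smul_eq_mul, mul_comm, measureReal_def]
  -- bounds on the three sequences
  have hAb : ∀ k : ℕ, ‖∫ ω, f (ω k) ∂(P xstar)‖ ≤ M := by
    intro k
    have h := norm_integral_le_of_norm_le_const (μ := P xstar)
      (f := fun ω : ℕ → G => f (ω k)) (C := M)
      (ae_of_all _ fun ω => by simpa [Real.norm_eq_abs] using hfM (ω k))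
    simpa [measure_univ] using h
  have hUb : ∀ k : ℕ, ‖∫ ω, (if ∀ i ≤ k, ω i ≠ xstar then f (ω k) else 0) ∂(P x)‖ ≤ M := by
    intro k
    have h := norm_integral_le_of_norm_le_const (μ := P x)
      (f := fun ω : ℕ → G => if ∀ i ≤ k, ω i ≠ xstar then f (ω k) else 0) (C := M)
      (ae_of_all _ fun ω => by
        by_cases h : ∀ i ≤ k, ω i ≠ xstar
        · rw [if_pos h]
          simpa [Real.norm_eq_abs] using hfM (ω k)
        · rw [if_neg h, norm_zero]
          exact hM0)
    simpa [measure_univ] using h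
  have hRb : ∀ j : ℕ, ‖(P x {ω | (∀ i < j, ω i ≠ xstar) ∧ ω j = xstar}).toReal‖ ≤ 1 := by
    intro j
    rw [Real.norm_eq_abs, abs_of_nonneg ENNReal.toReal_nonneg]
    have h := prob_le_one (μ := P x) (s := {ω | (∀ i < j, ω i ≠ xstar) ∧ ω j = xstar})
    simpa using ENNReal.toReal_mono ENNReal.one_ne_top h
  -- summabilities
  have hRn : Summable (fun j : ℕ =>
      ‖s ^ j * (P x {ω | (∀ i < j, ω i ≠ xstar) ∧ ω j = xstar}).toReal‖) := by
    refine Summable.of_nonneg_of_le (fun j => norm_nonneg _) (fun j => ?_) hgeo1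
    rw [norm_mul, norm_pow, Real.norm_eq_abs]
    calc |s| ^ j * ‖(P x {ω | (∀ i < j, ω i ≠ xstar) ∧ ω j = xstar}).toReal‖
        ≤ |s| ^ j * 1 := mul_le_mul_of_nonneg_left (hRb j) (by positivity)
      _ = |s| ^ j := mul_one _
  have hAn : Summable (fun k : ℕ => ‖s ^ k * ∫ ω, f (ω k) ∂(P xstar)‖) := by
    refine Summable.of_nonneg_of_le (fun k => norm_nonneg _) (fun k => ?_) hgeoM
    rw [norm_mul, norm_pow, Real.norm_eq_abs]
    exact mul_le_mul_of_nonneg_left (hAb k) (by positivity)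
  have hUsum : Summable (fun k : ℕ =>
      s ^ k * ∫ ω, (if ∀ i ≤ k, ω i ≠ xstar then f (ω k) else 0) ∂(P x)) := by
    refine Summable.of_norm_bounded hgeoM (fun k => ?_)
    rw [norm_mul, norm_pow, Real.norm_eq_abs]
    exact mul_le_mul_of_nonneg_left (hUb k) (by positivity)
  have hconv : Summable (fun n : ℕ => ∑ j ∈ Finset.range (n + 1),
      (s ^ j * (P x {ω | (∀ i < j, ω i ≠ xstar) ∧ ω j = xstar}).toReal) *
        (s ^ (n - j) * ∫ ω, f (ω (n - j)) ∂(P xstar))) :=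
    (summable_norm_sum_mul_range_of_summable_norm hRn hAn).of_norm
  -- assemble
  rw [hInt1, hInt2]
  calc (∑' k : ℕ, s ^ k * ∫ ω, f (ω k) ∂(P x))
      = ∑' k : ℕ, (s ^ k * (∫ ω, (if ∀ i ≤ k, ω i ≠ xstar then f (ω k) else 0) ∂(P x))
          + ∑ j ∈ Finset.range (k + 1),
              (s ^ j * (P x {ω | (∀ i < j, ω i ≠ xstar) ∧ ω j = xstar}).toReal) *
                (s ^ (k - j) * ∫ ω, f (ω (k - j)) ∂(P xstar))) := by
        refine tsum_congr fun k => ?_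
        rw [key_decomp κ P hcyl hP f M hfM xstar x k, mul_add, Finset.mul_sum]
        congr 1
        refine Finset.sum_congr rfl fun j hj => ?_
        rw [Finset.mem_range] at hj
        have hsk : s ^ k = s ^ j * s ^ (k - j) := by
          rw [← pow_add]
          congr 1
          omega
        rw [hsk]
        ring
    _ = (∑' k : ℕ, s ^ k * ∫ ω, (if ∀ i ≤ k, ω i ≠ xstar then f (ω k) else 0) ∂(P x))
        + ∑' k : ℕ, ∑ j ∈ Finset.range (k + 1),
            (s ^ j * (P x {ω | (∀ i < j, ω i ≠ xstar) ∧ ω j = xstar}).toReal) *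
              (s ^ (k - j) * ∫ ω, f (ω (k - j)) ∂(P xstar)) := Summable.tsum_add hUsum hconv
    _ = (∑' k : ℕ, s ^ k * ∫ ω, (if ∀ i ≤ k, ω i ≠ xstar then f (ω k) else 0) ∂(P x))
        + (∑' j : ℕ, s ^ j * (P x {ω | (∀ i < j, ω i ≠ xstar) ∧ ω j = xstar}).toReal) *
            ∑' k : ℕ, s ^ k * ∫ ω, f (ω k) ∂(P xstar) := by
        rw [← tsum_mul_tsum_eq_tsum_sum_range_of_summable_norm hRn hAn]
end

section
/- Let t_1 > 0 and, for each v > 0, let g_v : ℕ₀ → ℕ₀ be nondecreasing, extended by g_v(−1) := 0. If lim_{v→∞} g_v(⌊v t_1⌋)/v = 0, then lim_{v→∞} sup_{t ∈ [0, t_1]} | (⌊vt⌋ − g_v(⌊vt⌋ − 1))/v − t | = 0. -/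
open Filter

/-- Let `t₁ > 0` and, for each `v > 0`, let `g v : ℕ → ℕ` be
nondecreasing, extended by `g v (-1) := 0`. If `g v ⌊v t₁⌋ / v → 0` as `v → ∞`, then
`sup_{t ∈ [0, t₁]} |(⌊vt⌋ - g v (⌊vt⌋ - 1))/v - t| → 0` as `v → ∞`. -/
theorem statement16
    (t₁ : ℝ) (ht₁ : 0 < t₁) (g : ℝ → ℕ → ℕ)
    (hmono : ∀ v : ℝ, 0 < v → Monotone (g v))
    (hlim : Tendsto (fun v : ℝ => (g v (⌊v * t₁⌋.toNat) : ℝ) / v) atTop (nhds 0)) :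
    ∀ ε : ℝ, 0 < ε → ∃ v₀ : ℝ, ∀ v : ℝ, v₀ ≤ v → ∀ t ∈ Set.Icc (0 : ℝ) t₁,
      |(((⌊v * t⌋ : ℤ) : ℝ) -
          (if ⌊v * t⌋ - 1 < 0 then (0 : ℝ) else (g v (⌊v * t⌋ - 1).toNat : ℝ))) / v - t| ≤ ε := by
  intro ε hε
  obtain ⟨N, hN⟩ := Metric.tendsto_atTop.mp hlim (ε / 2) (by positivity)
  refine ⟨max N (max (2 / ε) 1), fun v hv t ht => ?_⟩
  have hv1 : (1 : ℝ) ≤ v := le_trans ((le_max_right _ _).trans (le_max_right N _)) hv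
  have hvpos : 0 < v := lt_of_lt_of_le one_pos hv1
  have hvN : N ≤ v := le_trans (le_max_left _ _) hv
  have hv2 : 2 / ε ≤ v := le_trans ((le_max_left _ _).trans (le_max_right N _)) hv
  have hg : (g v (⌊v * t₁⌋.toNat) : ℝ) / v ≤ ε / 2 := by
    have h := hN v hvN
    rw [Real.dist_eq, sub_zero] at h
    exact (le_abs_self _).trans h.le
  have h1v : (1 : ℝ) ≤ ε / 2 * v := by
    have h2 : (2 : ℝ) ≤ ε * v := by
      have := (div_le_iff₀ hε).mp hv2
      linarith
    linarith
  have hgmax : (g v (⌊v * t₁⌋.toNat) : ℝ) ≤ ε / 2 * v := by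
    have := (div_le_iff₀ hvpos).mp hg
    linarith
  set G : ℝ := if ⌊v * t⌋ - 1 < 0 then (0 : ℝ) else (g v (⌊v * t⌋ - 1).toNat : ℝ) with hGdef
  have hG0 : 0 ≤ G := by
    rw [hGdef]; split
    · exact le_rfl
    · positivity
  have hGle : G ≤ (g v (⌊v * t₁⌋.toNat) : ℝ) := by
    rw [hGdef]; split
    · positivity
    · exact_mod_cast hmono v hvpos (Int.toNat_le_toNat (by
        have : ⌊v * t⌋ ≤ ⌊v * t₁⌋ :=
          Int.floor_le_floor (mul_le_mul_of_nonneg_left ht.2 hvpos.le)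
        omega))
  have hfl : ((⌊v * t⌋ : ℤ) : ℝ) ≤ v * t := Int.floor_le _
  have hfl2 : v * t - 1 < ((⌊v * t⌋ : ℤ) : ℝ) := Int.sub_one_lt_floor _
  have heq : (((⌊v * t⌋ : ℤ) : ℝ) - G) / v - t = (((⌊v * t⌋ : ℤ) : ℝ) - G - v * t) / v := by
    field_simp
  rw [heq, abs_div, abs_of_pos hvpos, div_le_iff₀ hvpos, abs_le]
  constructor <;> nlinarith
end
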